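/- arXiv:2203.14624 — 11 statements merged into one kernel-verified Lean document; each statement's English description precedes it below -/
import Mathlib

section
/- Let T > 0. If φ(t) > 0 for all t ∈ (0,T), then ψ(t) > 0 for all t ∈ (0,T), and moreover φ'(t)/φ(t) ≤ ψ'(t)/ψ(t) and φ(t) ≤ ψ(t) for all t ∈ (0,T). -/
open Set Filter MeasureTheory

/-- Sturm-type comparison (Lemma 2.5): if `φ'' ≤ G φ`, `ψ'' ≥ G ψ` on `(0,∞)`,
`φ(0) = ψ(0) = 1`, `φ'(0) = b ≤ b̃ = ψ'(0)`, and `φ > 0` on `(0,T)`,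
then `ψ > 0`, `φ'/φ ≤ ψ'/ψ` and `φ ≤ ψ` on `(0,T)`. -/
theorem stmt_0 (G φ ψ : ℝ → ℝ) (b b' : ℝ)
    (hG : ContinuousOn G (Ici 0))
    (hφ : ContDiffOn ℝ 2 φ (Ici 0))
    (hψ : ContDiffOn ℝ 2 ψ (Ici 0))
    (hφ'' : ∀ t ∈ Ioi (0 : ℝ),
      derivWithin (derivWithin φ (Ici 0)) (Ici 0) t ≤ G t * φ t)
    (hψ'' : ∀ t ∈ Ioi (0 : ℝ),
      G t * ψ t ≤ derivWithin (derivWithin ψ (Ici 0)) (Ici 0) t)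
    (hφ0 : φ 0 = 1) (hψ0 : ψ 0 = 1)
    (hφ'0 : derivWithin φ (Ici 0) 0 = b)
    (hψ'0 : derivWithin ψ (Ici 0) 0 = b')
    (hbb : b ≤ b')
    (T : ℝ) (hT : 0 < T)
    (hφpos : ∀ t ∈ Ioo 0 T, 0 < φ t) :
    (∀ t ∈ Ioo 0 T, 0 < ψ t) ∧
    (∀ t ∈ Ioo 0 T,
      derivWithin φ (Ici 0) t / φ t ≤ derivWithin ψ (Ici 0) t / ψ t) ∧
    (∀ t ∈ Ioo 0 T, φ t ≤ ψ t) := by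
  have hU : UniqueDiffOn ℝ (Ici (0:ℝ)) := uniqueDiffOn_Ici 0
  have hφd : DifferentiableOn ℝ φ (Ici 0) := hφ.differentiableOn (by norm_num)
  have hψd : DifferentiableOn ℝ ψ (Ici 0) := hψ.differentiableOn (by norm_num)
  have hφ'cd : ContDiffOn ℝ 1 (derivWithin φ (Ici 0)) (Ici 0) :=
    hφ.derivWithin hU (by norm_num)
  have hψ'cd : ContDiffOn ℝ 1 (derivWithin ψ (Ici 0)) (Ici 0) :=
    hψ.derivWithin hU (by norm_num)
  have hφ'd : DifferentiableOn ℝ (derivWithin φ (Ici 0)) (Ici 0) :=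
    hφ'cd.differentiableOn (by norm_num)
  have hψ'd : DifferentiableOn ℝ (derivWithin ψ (Ici 0)) (Ici 0) :=
    hψ'cd.differentiableOn (by norm_num)
  set W : ℝ → ℝ := fun t =>
    derivWithin ψ (Ici 0) t * φ t - derivWithin φ (Ici 0) t * ψ t with hWdef
  have hWc : ContinuousOn W (Ici 0) :=
    ((hψ'cd.continuousOn.mul hφ.continuousOn).sub
      (hφ'cd.continuousOn.mul hψ.continuousOn))
  have hWderiv : ∀ t ∈ Ici (0:ℝ), HasDerivWithinAt W
      (derivWithin (derivWithin ψ (Ici 0)) (Ici 0) t * φ t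
        + derivWithin ψ (Ici 0) t * derivWithin φ (Ici 0) t
        - (derivWithin (derivWithin φ (Ici 0)) (Ici 0) t * ψ t
          + derivWithin φ (Ici 0) t * derivWithin ψ (Ici 0) t)) (Ici 0) t := by
    intro t ht
    exact (((hψ'd t ht).hasDerivWithinAt.mul (hφd t ht).hasDerivWithinAt).sub
      (((hφ'd t ht).hasDerivWithinAt.mul (hψd t ht).hasDerivWithinAt)))
  -- key: for any c ∈ [0, T) with ψ > 0 on (0, c), the Wronskian is nonneg and ψ/φ monotone
  have key : ∀ c : ℝ, 0 ≤ c → c < T → (∀ t ∈ Ioo (0:ℝ) c, 0 < ψ t) →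
      (∀ t ∈ Icc (0:ℝ) c, 0 ≤ W t) ∧ MonotoneOn (fun t => ψ t / φ t) (Icc 0 c) := by
    intro c hc0 hcT hψc
    have hsub : Icc (0:ℝ) c ⊆ Ici 0 := Icc_subset_Ici_self
    have hφposc : ∀ t ∈ Icc (0:ℝ) c, 0 < φ t := by
      intro t ht
      rcases eq_or_lt_of_le ht.1 with h | h
      · rw [← h, hφ0]; norm_num
      · exact hφpos t ⟨h, lt_of_le_of_lt ht.2 hcT⟩
    have hWmono : MonotoneOn W (Icc 0 c) := by
      apply monotoneOn_of_deriv_nonneg (convex_Icc 0 c) (hWc.mono hsub)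
      · rw [interior_Icc]
        intro t ht
        have htI : Ici (0:ℝ) ∈ nhds t := Ici_mem_nhds ht.1
        exact (((hWderiv t (le_of_lt ht.1)).hasDerivAt htI).differentiableAt).differentiableWithinAt
      · rw [interior_Icc]
        intro t ht
        have htI : Ici (0:ℝ) ∈ nhds t := Ici_mem_nhds ht.1
        rw [((hWderiv t (le_of_lt ht.1)).hasDerivAt htI).deriv]
        have h1 : G t * ψ t ≤ derivWithin (derivWithin ψ (Ici 0)) (Ici 0) t :=
          hψ'' t ht.1
        have h2 : derivWithin (derivWithin φ (Ici 0)) (Ici 0) t ≤ G t * φ t :=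
          hφ'' t ht.1
        have hφn : 0 ≤ φ t := (hφposc t ⟨le_of_lt ht.1, le_of_lt ht.2⟩).le
        have hψn : 0 ≤ ψ t := (hψc t ht).le
        nlinarith [mul_le_mul_of_nonneg_right h1 hφn, mul_le_mul_of_nonneg_right h2 hψn]
    have hW0 : 0 ≤ W 0 := by
      simp only [hWdef, hφ0, hψ0, hφ'0, hψ'0]; linarith
    have hWnn : ∀ t ∈ Icc (0:ℝ) c, 0 ≤ W t := fun t ht =>
      le_trans hW0 (hWmono ⟨le_rfl, hc0⟩ ht ht.1)
    refine ⟨hWnn, ?_⟩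
    apply monotoneOn_of_deriv_nonneg (convex_Icc 0 c)
    · exact ContinuousOn.div (hψ.continuousOn.mono hsub) (hφ.continuousOn.mono hsub)
        (fun t ht => (hφposc t ht).ne')
    · rw [interior_Icc]
      intro t ht
      have htI : Ici (0:ℝ) ∈ nhds t := Ici_mem_nhds ht.1
      have htc : t ∈ Icc (0:ℝ) c := ⟨le_of_lt ht.1, le_of_lt ht.2⟩
      have hd : HasDerivAt (fun t => ψ t / φ t)
          ((derivWithin ψ (Ici 0) t * φ t - ψ t * derivWithin φ (Ici 0) t) / φ t ^ 2) t := by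
        exact HasDerivAt.div ((hψd t (hsub htc)).hasDerivWithinAt.hasDerivAt htI)
          ((hφd t (hsub htc)).hasDerivWithinAt.hasDerivAt htI) (hφposc t htc).ne'
      exact hd.differentiableAt.differentiableWithinAt
    · rw [interior_Icc]
      intro t ht
      have htI : Ici (0:ℝ) ∈ nhds t := Ici_mem_nhds ht.1
      have htc : t ∈ Icc (0:ℝ) c := ⟨le_of_lt ht.1, le_of_lt ht.2⟩
      have hd : HasDerivAt (fun t => ψ t / φ t)
          ((derivWithin ψ (Ici 0) t * φ t - ψ t * derivWithin φ (Ici 0) t) / φ t ^ 2) t :=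
        HasDerivAt.div ((hψd t (hsub htc)).hasDerivWithinAt.hasDerivAt htI)
          ((hφd t (hsub htc)).hasDerivWithinAt.hasDerivAt htI) (hφposc t htc).ne'
      rw [hd.deriv]
      apply div_nonneg _ (sq_nonneg _)
      have := hWnn t htc
      simp only [hWdef] at this
      linarith [this]
  -- Step 1 : ψ > 0 on [0, T)
  have step1 : ∀ t ∈ Ico (0:ℝ) T, 0 < ψ t := by
    by_contra h
    push_neg at h
    obtain ⟨s, hs, hψs⟩ := h
    set Z : Set ℝ := {t ∈ Icc (0:ℝ) s | ψ t ≤ 0} with hZdef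
    have hZne : Z.Nonempty := ⟨s, ⟨hs.1, le_rfl⟩, hψs⟩
    have hZclosed : IsClosed Z := by
      have : Z = Icc 0 s ∩ ψ ⁻¹' (Iic 0) := rfl
      rw [this]
      exact ContinuousOn.preimage_isClosed_of_isClosed
        (hψ.continuousOn.mono (Icc_subset_Ici_self)) isClosed_Icc isClosed_Iic
    have hZbdd : BddBelow Z := ⟨0, fun t ht => ht.1.1⟩
    set t₁ := sInf Z with ht₁def
    have ht₁Z : t₁ ∈ Z := hZclosed.csInf_mem hZne hZbdd
    have ht₁0 : 0 < t₁ := by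
      rcases eq_or_lt_of_le ht₁Z.1.1 with h | h
      · exfalso; have := ht₁Z.2; rw [← h, hψ0] at this; linarith
      · exact h
    have ht₁T : t₁ < T := lt_of_le_of_lt ht₁Z.1.2 hs.2
    have hψt₁ : ∀ t ∈ Ioo (0:ℝ) t₁, 0 < ψ t := by
      intro t ht
      by_contra hc
      push_neg at hc
      have : t ∈ Z := ⟨⟨ht.1.le, le_trans ht.2.le ht₁Z.1.2⟩, hc⟩
      exact absurd (csInf_le hZbdd this) (not_le.mpr ht.2)
    obtain ⟨-, hmono⟩ := key t₁ ht₁0.le ht₁T hψt₁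
    have h1 : ψ 0 / φ 0 ≤ ψ t₁ / φ t₁ :=
      hmono ⟨le_rfl, ht₁0.le⟩ ⟨ht₁0.le, le_rfl⟩ ht₁0.le
    rw [hψ0, hφ0] at h1
    have hφt₁ : 0 < φ t₁ := hφpos t₁ ⟨ht₁0, ht₁T⟩
    have : φ t₁ ≤ ψ t₁ := by
      have := (one_le_div hφt₁).mp (by simpa using h1)
      linarith
    linarith [ht₁Z.2]
  refine ⟨fun t ht => step1 t ⟨ht.1.le, ht.2⟩, ?_, ?_⟩
  · intro t ht
    have hψt : ∀ u ∈ Ioo (0:ℝ) t, 0 < ψ u := fun u hu =>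
      step1 u ⟨hu.1.le, lt_trans hu.2 ht.2⟩
    obtain ⟨hWnn, -⟩ := key t ht.1.le ht.2 hψt
    have hWt := hWnn t ⟨ht.1.le, le_rfl⟩
    simp only [hWdef] at hWt
    have hφt : 0 < φ t := hφpos t ht
    have hψt' : 0 < ψ t := step1 t ⟨ht.1.le, ht.2⟩
    rw [div_le_div_iff₀ hφt hψt']
    linarith
  · intro t ht
    have hψt : ∀ u ∈ Ioo (0:ℝ) t, 0 < ψ u := fun u hu =>
      step1 u ⟨hu.1.le, lt_trans hu.2 ht.2⟩
    obtain ⟨-, hmono⟩ := key t ht.1.le ht.2 hψt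
    have h1 : ψ 0 / φ 0 ≤ ψ t / φ t :=
      hmono ⟨le_rfl, ht.1.le⟩ ⟨ht.1.le, le_rfl⟩ ht.1.le
    rw [hψ0, hφ0] at h1
    have hφt : 0 < φ t := hφpos t ht
    have := (one_le_div hφt).mp (by simpa using h1)
    linarith
end

section
/- Let τ > 0. If φ(t) > 0 and ψ(t) > 0 for all t ∈ (0,τ), then the function ψ'·φ − ψ·φ' is nonnegative on [0,τ). -/
open Set Filter MeasureTheory

/-- Nonnegativity of the Wronskian `ψ'φ - ψφ'` on `[0,τ)` when `φ, ψ > 0` on `(0,τ)`,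
where `φ'' ≤ G φ`, `ψ'' ≥ G ψ`, `φ(0) = ψ(0) = 1`, `φ'(0) = b ≤ b̃ = ψ'(0)`. -/
theorem stmt_1 (G φ ψ : ℝ → ℝ) (b b' : ℝ)
    (hG : ContinuousOn G (Ici 0))
    (hφ : ContDiffOn ℝ 2 φ (Ici 0))
    (hψ : ContDiffOn ℝ 2 ψ (Ici 0))
    (hφ'' : ∀ t ∈ Ioi (0 : ℝ),
      derivWithin (derivWithin φ (Ici 0)) (Ici 0) t ≤ G t * φ t)
    (hψ'' : ∀ t ∈ Ioi (0 : ℝ),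
      G t * ψ t ≤ derivWithin (derivWithin ψ (Ici 0)) (Ici 0) t)
    (hφ0 : φ 0 = 1) (hψ0 : ψ 0 = 1)
    (hφ'0 : derivWithin φ (Ici 0) 0 = b)
    (hψ'0 : derivWithin ψ (Ici 0) 0 = b')
    (hbb : b ≤ b')
    (τ : ℝ) (hτ : 0 < τ)
    (hφpos : ∀ t ∈ Ioo 0 τ, 0 < φ t)
    (hψpos : ∀ t ∈ Ioo 0 τ, 0 < ψ t) :
    ∀ t ∈ Ico 0 τ,
      0 ≤ derivWithin ψ (Ici 0) t * φ t - ψ t * derivWithin φ (Ici 0) t := by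
  intro t ht
  set φ' := derivWithin φ (Ici 0) with hφ'def
  set ψ' := derivWithin ψ (Ici 0) with hψ'def
  set W : ℝ → ℝ := fun s => ψ' s * φ s - ψ s * φ' s with hWdef
  have hφ'd : ContDiffOn ℝ 1 φ' (Ici 0) :=
    hφ.derivWithin (uniqueDiffOn_Ici 0) (by norm_num)
  have hψ'd : ContDiffOn ℝ 1 ψ' (Ici 0) :=
    hψ.derivWithin (uniqueDiffOn_Ici 0) (by norm_num)
  have hφdiff : DifferentiableOn ℝ φ (Ici 0) := hφ.differentiableOn (by norm_num)
  have hψdiff : DifferentiableOn ℝ ψ (Ici 0) := hψ.differentiableOn (by norm_num)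
  have hφ'diff : DifferentiableOn ℝ φ' (Ici 0) := hφ'd.differentiableOn (by norm_num)
  have hψ'diff : DifferentiableOn ℝ ψ' (Ici 0) := hψ'd.differentiableOn (by norm_num)
  have hWc : ContinuousOn W (Icc 0 t) := by
    apply ContinuousOn.mono _ (Icc_subset_Ici_self)
    exact ((hψ'd.continuousOn.mul hφ.continuousOn).sub
      (hψ.continuousOn.mul hφ'd.continuousOn))
  -- derivative data at interior points
  have key : ∀ x ∈ Ioo (0:ℝ) t,
      HasDerivAt W (derivWithin ψ' (Ici 0) x * φ x - ψ x * derivWithin φ' (Ici 0) x) x := by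
    intro x hx
    have hx0 : (0:ℝ) < x := hx.1
    have hnhds : Ici (0:ℝ) ∈ nhds x := Ici_mem_nhds hx0
    have hxI : x ∈ Ici (0:ℝ) := le_of_lt hx0
    have Hφ : HasDerivAt φ (φ' x) x :=
      ((hφdiff x hxI).hasDerivWithinAt).hasDerivAt hnhds
    have Hψ : HasDerivAt ψ (ψ' x) x :=
      ((hψdiff x hxI).hasDerivWithinAt).hasDerivAt hnhds
    have Hφ' : HasDerivAt φ' (derivWithin φ' (Ici 0) x) x :=
      ((hφ'diff x hxI).hasDerivWithinAt).hasDerivAt hnhds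
    have Hψ' : HasDerivAt ψ' (derivWithin ψ' (Ici 0) x) x :=
      ((hψ'diff x hxI).hasDerivWithinAt).hasDerivAt hnhds
    have := (Hψ'.mul Hφ).sub (Hψ.mul Hφ')
    refine this.congr_deriv ?_
    ring
  have hmono : MonotoneOn W (Icc 0 t) := by
    apply monotoneOn_of_deriv_nonneg (convex_Icc 0 t) hWc
    · intro x hx
      rw [interior_Icc] at hx
      exact (key x hx).differentiableAt.differentiableWithinAt
    · intro x hx
      rw [interior_Icc] at hx
      rw [(key x hx).deriv]
      have hxτ : x ∈ Ioo (0:ℝ) τ := ⟨hx.1, lt_trans hx.2 ht.2⟩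
      have h1 := hψ'' x hx.1
      have h2 := hφ'' x hx.1
      have h3 := hφpos x hxτ
      have h4 := hψpos x hxτ
      nlinarith
  have hW0 : (0:ℝ) ≤ W 0 := by
    simp only [hWdef, hφ0, hψ0, hφ'0, hψ'0]
    linarith
  have hle := hmono (left_mem_Icc.2 ht.1) (right_mem_Icc.2 ht.1) ht.1
  have : (0:ℝ) ≤ W t := le_trans hW0 hle
  simpa [hWdef] using this
end

section
/- If ∫₀^∞ G(t) dt < ∞, then the limits lim_{t→∞} h₂(t)/h₁(t) and lim_{t→∞} h₂'(t)/h₁'(t) both exist, are equal to each other, and satisfy lim_{t→∞} h₂(t)/h₁(t) = lim_{t→∞} h₂'(t)/h₁'(t) ≤ ∫₀^∞ G(t) dt < ∞. -/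
open Set Filter MeasureTheory Topology

/-- Lemma 2.6: if `∫₀^∞ G < ∞` then `lim h₂/h₁ = lim h₂'/h₁' ≤ ∫₀^∞ G`. -/
theorem stmt_2 (G h₁ h₂ : ℝ → ℝ)
    (hG : ContinuousOn G (Ici 0)) (hGnn : ∀ t ∈ Ici (0 : ℝ), 0 ≤ G t)
    (hh₁ : ContDiffOn ℝ 2 h₁ (Ici 0)) (hh₂ : ContDiffOn ℝ 2 h₂ (Ici 0))
    (ode₁ : ∀ t ∈ Ici (0 : ℝ),
      derivWithin (derivWithin h₁ (Ici 0)) (Ici 0) t = G t * h₁ t)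
    (ode₂ : ∀ t ∈ Ici (0 : ℝ),
      derivWithin (derivWithin h₂ (Ici 0)) (Ici 0) t = G t * h₂ t)
    (h₁0 : h₁ 0 = 0) (h₁'0 : derivWithin h₁ (Ici 0) 0 = 1)
    (h₂0 : h₂ 0 = 1) (h₂'0 : derivWithin h₂ (Ici 0) 0 = 0)
    (hint : IntegrableOn G (Ioi 0)) :
    ∃ L : ℝ,
      Tendsto (fun t => h₂ t / h₁ t) atTop (nhds L) ∧
      Tendsto (fun t => derivWithin h₂ (Ici 0) t / derivWithin h₁ (Ici 0) t)
        atTop (nhds L) ∧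
      L ≤ ∫ t in Ioi (0 : ℝ), G t := by
  set g₁ := derivWithin h₁ (Ici 0) with hg₁def
  set g₂ := derivWithin h₂ (Ici 0) with hg₂def
  have uD : UniqueDiffOn ℝ (Ici (0:ℝ)) := uniqueDiffOn_Ici 0
  have hc₁ : ContinuousOn h₁ (Ici 0) := hh₁.continuousOn
  have hc₂ : ContinuousOn h₂ (Ici 0) := hh₂.continuousOn
  have hd₁ : DifferentiableOn ℝ h₁ (Ici 0) := hh₁.differentiableOn (by norm_num)
  have hd₂ : DifferentiableOn ℝ h₂ (Ici 0) := hh₂.differentiableOn (by norm_num)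
  have hg₁C : ContDiffOn ℝ 1 g₁ (Ici 0) := hh₁.derivWithin uD (by norm_num)
  have hg₂C : ContDiffOn ℝ 1 g₂ (Ici 0) := hh₂.derivWithin uD (by norm_num)
  have hg₁c : ContinuousOn g₁ (Ici 0) := hg₁C.continuousOn
  have hg₂c : ContinuousOn g₂ (Ici 0) := hg₂C.continuousOn
  have hg₁d : DifferentiableOn ℝ g₁ (Ici 0) := hg₁C.differentiableOn (by norm_num)
  have hg₂d : DifferentiableOn ℝ g₂ (Ici 0) := hg₂C.differentiableOn (by norm_num)
  -- derivatives as true derivatives at interior points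
  have HD1 : ∀ t : ℝ, 0 < t → HasDerivAt h₁ (g₁ t) t := fun t ht =>
    ((hd₁ t ht.le).hasDerivWithinAt).hasDerivAt (Ici_mem_nhds ht)
  have HD2 : ∀ t : ℝ, 0 < t → HasDerivAt h₂ (g₂ t) t := fun t ht =>
    ((hd₂ t ht.le).hasDerivWithinAt).hasDerivAt (Ici_mem_nhds ht)
  have HD1' : ∀ t : ℝ, 0 < t → HasDerivAt g₁ (G t * h₁ t) t := fun t ht => by
    have := ((hg₁d t ht.le).hasDerivWithinAt).hasDerivAt (Ici_mem_nhds ht)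
    rwa [ode₁ t ht.le] at this
  have HD2' : ∀ t : ℝ, 0 < t → HasDerivAt g₂ (G t * h₂ t) t := fun t ht => by
    have := ((hg₂d t ht.le).hasDerivWithinAt).hasDerivAt (Ici_mem_nhds ht)
    rwa [ode₂ t ht.le] at this
  -- h₁ is positive just to the right of 0
  have hsmall : ∃ δ > (0:ℝ), ∀ t, 0 < t → t < δ → 0 < h₁ t := by
    have hder0 : HasDerivWithinAt h₁ 1 (Ioi 0) 0 := by
      have := (hd₁ 0 self_mem_Ici).hasDerivWithinAt
      rw [← hg₁def, h₁'0] at this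
      exact this.mono Ioi_subset_Ici_self
    have hslope : Tendsto (slope h₁ 0) (𝓝[>] (0:ℝ)) (𝓝 1) := by
      have := hasDerivWithinAt_iff_tendsto_slope.mp hder0
      rwa [Set.diff_singleton_eq_self (by simp)] at this
    have hev : ∀ᶠ t in 𝓝[>] (0:ℝ), 0 < slope h₁ 0 t :=
      hslope.eventually_const_lt (by norm_num)
    have hev' : ∀ᶠ t in 𝓝[>] (0:ℝ), 0 < h₁ t := by
      filter_upwards [hev, self_mem_nhdsWithin] with t h1 h2
      have ht : (0:ℝ) < t := h2
      have : slope h₁ 0 t = h₁ t / t := by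
        simp [slope_def_field, h₁0]
      rw [this] at h1
      exact (div_pos_iff.mp h1).resolve_right (fun h => absurd ht (not_lt.mpr h.2.le)) |>.1
    rcases (mem_nhdsGT_iff_exists_Ioo_subset).mp hev' with ⟨δ, hδ, hsub⟩
    exact ⟨δ, hδ, fun t ht1 ht2 => hsub ⟨ht1, ht2⟩⟩
  -- h₁ > 0 on (0, ∞)
  have h₁pos : ∀ t : ℝ, 0 < t → 0 < h₁ t := by
    by_contra hcon
    push_neg at hcon
    obtain ⟨t₀, ht₀, ht₀'⟩ := hcon
    set T : Set ℝ := {t : ℝ | 0 < t ∧ h₁ t ≤ 0} with hT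
    have hTne : T.Nonempty := ⟨t₀, ht₀, ht₀'⟩
    have hTbdd : BddBelow T := ⟨0, fun t ht => ht.1.le⟩
    set b := sInf T with hb
    obtain ⟨δ, hδ, hδpos⟩ := hsmall
    have hδle : ∀ t ∈ T, δ ≤ t := by
      intro t ht
      by_contra hlt
      push_neg at hlt
      exact absurd (hδpos t ht.1 hlt) (not_lt.mpr ht.2)
    have hbpos : 0 < b := lt_of_lt_of_le hδ (le_csInf hTne hδle)
    -- h₁ b ≤ 0 by continuity
    have hcb : ContinuousAt h₁ b := (hc₁.continuousAt (Ici_mem_nhds hbpos))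
    have hbcl : b ∈ closure T := csInf_mem_closure hTne hTbdd
    have hneb : (𝓝[T] b).NeBot := mem_closure_iff_nhdsWithin_neBot.mp hbcl
    have hb_le : h₁ b ≤ 0 := by
      have ht : Tendsto h₁ (𝓝[T] b) (𝓝 (h₁ b)) :=
        hcb.continuousWithinAt.tendsto
      refine le_of_tendsto ht ?_
      filter_upwards [eventually_mem_nhdsWithin] with x hx
      exact hx.2
    -- h₁ ≥ 0 on [0, b)
    have hnn : ∀ s, 0 ≤ s → s < b → 0 ≤ h₁ s := by
      intro s hs hsb
      rcases eq_or_lt_of_le hs with h | h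
      · simp [← h, h₁0]
      · by_contra hneg
        push_neg at hneg
        exact absurd (csInf_le hTbdd ⟨h, hneg.le⟩) (not_le.mpr hsb)
    -- g₁ monotone on [0, b]
    have mono1 : MonotoneOn g₁ (Icc 0 b) := by
      apply monotoneOn_of_deriv_nonneg (convex_Icc 0 b)
        (hg₁c.mono (Icc_subset_Ici_self))
      · intro x hx
        rw [interior_Icc] at hx
        exact ((HD1' x hx.1).differentiableAt).differentiableWithinAt
      · intro x hx
        rw [interior_Icc] at hx
        rw [(HD1' x hx.1).deriv]
        exact mul_nonneg (hGnn x hx.1.le) (hnn x hx.1.le hx.2)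
    have g₁ge : ∀ s ∈ Icc (0:ℝ) b, 1 ≤ g₁ s := by
      intro s hs
      have := mono1 (left_mem_Icc.mpr hbpos.le) hs hs.1
      rwa [show g₁ 0 = 1 from h₁'0] at this
    -- h₁ t - t monotone on [0, b]
    have mono2 : MonotoneOn (fun t => h₁ t - t) (Icc 0 b) := by
      apply monotoneOn_of_deriv_nonneg (convex_Icc 0 b)
        ((hc₁.mono Icc_subset_Ici_self).sub continuous_id.continuousOn)
      · intro x hx
        rw [interior_Icc] at hx
        exact (((HD1 x hx.1).sub (hasDerivAt_id x)).differentiableAt).differentiableWithinAt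
      · intro x hx
        rw [interior_Icc] at hx
        rw [((HD1 x hx.1).sub (hasDerivAt_id x)).deriv]
        have := g₁ge x ⟨hx.1.le, hx.2.le⟩
        linarith
    have := mono2 (left_mem_Icc.mpr hbpos.le) (right_mem_Icc.mpr hbpos.le) hbpos.le
    simp only [h₁0, sub_zero, zero_sub] at this
    -- h₁ b - b ≥ -0, so h₁ b ≥ b > 0, contradiction
    have : b ≤ h₁ b := by linarith
    linarith
  have h₁nn : ∀ t : ℝ, 0 ≤ t → 0 ≤ h₁ t := by
    intro t ht
    rcases eq_or_lt_of_le ht with h | h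
    · simp [← h, h₁0]
    · exact (h₁pos t h).le
  -- g₁ ≥ 1 everywhere on [0, ∞)
  have g₁ge : ∀ t : ℝ, 0 ≤ t → 1 ≤ g₁ t := by
    intro t ht
    rcases eq_or_lt_of_le ht with h | h
    · rw [← h]; rw [show g₁ 0 = 1 from h₁'0]
    · have mono1 : MonotoneOn g₁ (Icc 0 t) := by
        apply monotoneOn_of_deriv_nonneg (convex_Icc 0 t)
          (hg₁c.mono (Icc_subset_Ici_self))
        · intro x hx
          rw [interior_Icc] at hx
          exact ((HD1' x hx.1).differentiableAt).differentiableWithinAt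
        · intro x hx
          rw [interior_Icc] at hx
          rw [(HD1' x hx.1).deriv]
          exact mul_nonneg (hGnn x hx.1.le) (h₁nn x hx.1.le)
      have := mono1 (left_mem_Icc.mpr ht) (right_mem_Icc.mpr ht) ht
      rwa [show g₁ 0 = 1 from h₁'0] at this
  have g₁pos : ∀ t : ℝ, 0 ≤ t → 0 < g₁ t := fun t ht =>
    lt_of_lt_of_le one_pos (g₁ge t ht)
  -- h₁ t ≥ t
  have h₁ge : ∀ t : ℝ, 0 ≤ t → t ≤ h₁ t := by
    intro t ht
    rcases eq_or_lt_of_le ht with h | h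
    · rw [← h, h₁0]
    · have mono2 : MonotoneOn (fun s => h₁ s - s) (Icc 0 t) := by
        apply monotoneOn_of_deriv_nonneg (convex_Icc 0 t)
          ((hc₁.mono Icc_subset_Ici_self).sub continuous_id.continuousOn)
        · intro x hx
          rw [interior_Icc] at hx
          exact (((HD1 x hx.1).sub (hasDerivAt_id x)).differentiableAt).differentiableWithinAt
        · intro x hx
          rw [interior_Icc] at hx
          rw [((HD1 x hx.1).sub (hasDerivAt_id x)).deriv]
          have := g₁ge x hx.1.le
          linarith
      have := mono2 (left_mem_Icc.mpr ht) (right_mem_Icc.mpr ht) ht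
      simp only [h₁0, sub_zero, zero_sub] at this
      linarith
  -- Wronskian
  set W : ℝ → ℝ := fun t => h₂ t * g₁ t - g₂ t * h₁ t with hW
  have HDW : ∀ t : ℝ, 0 < t → HasDerivAt W 0 t := by
    intro t ht
    have h := (((HD2 t ht).mul (HD1' t ht)).sub ((HD2' t ht).mul (HD1 t ht)))
    refine h.congr_deriv ?_
    ring
  have Wcont : ContinuousOn W (Ici 0) :=
    (hc₂.mul hg₁c).sub (hg₂c.mul hc₁)
  have Wconst : ∀ t : ℝ, 0 ≤ t → W t = 1 := by
    intro t ht
    have W0 : W 0 = 1 := by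
      simp [hW, h₂0, h₁0, show g₁ 0 = 1 from h₁'0, show g₂ 0 = 0 from h₂'0]
    rcases eq_or_lt_of_le ht with h | h
    · rw [← h, W0]
    · have monoW : MonotoneOn W (Icc 0 t) := by
        apply monotoneOn_of_deriv_nonneg (convex_Icc 0 t) (Wcont.mono Icc_subset_Ici_self)
        · intro x hx
          rw [interior_Icc] at hx
          exact ((HDW x hx.1).differentiableAt).differentiableWithinAt
        · intro x hx
          rw [interior_Icc] at hx
          rw [(HDW x hx.1).deriv]
      have antiW : AntitoneOn W (Icc 0 t) := by
        apply antitoneOn_of_deriv_nonpos (convex_Icc 0 t) (Wcont.mono Icc_subset_Ici_self)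
        · intro x hx
          rw [interior_Icc] at hx
          exact ((HDW x hx.1).differentiableAt).differentiableWithinAt
        · intro x hx
          rw [interior_Icc] at hx
          rw [(HDW x hx.1).deriv]
      have h1 := monoW (left_mem_Icc.mpr ht) (right_mem_Icc.mpr ht) ht
      have h2 := antiW (left_mem_Icc.mpr ht) (right_mem_Icc.mpr ht) ht
      rw [W0] at h1 h2
      linarith
  -- the ratio r = g₂ / g₁ and its derivative
  set r : ℝ → ℝ := fun t => g₂ t / g₁ t with hr
  set f : ℝ → ℝ := fun s => G s / g₁ s ^ 2 with hf
  have HDr : ∀ t : ℝ, 0 < t → HasDerivAt r (f t) t := by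
    intro t ht
    have hne : g₁ t ≠ 0 := (g₁pos t ht.le).ne'
    have h := (HD2' t ht).div (HD1' t ht) hne
    have hnum : G t * h₂ t * g₁ t - g₂ t * (G t * h₁ t) = G t := by
      have hw := Wconst t ht.le
      simp only [hW] at hw
      calc G t * h₂ t * g₁ t - g₂ t * (G t * h₁ t)
          = G t * (h₂ t * g₁ t - g₂ t * h₁ t) := by ring
        _ = G t := by rw [hw, mul_one]
    rw [hnum] at h
    exact h
  -- continuity of f and r on [0, ∞)
  have g₁ne : ∀ t ∈ Ici (0:ℝ), g₁ t ≠ 0 := fun t ht => (g₁pos t ht).ne'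
  have fcont : ContinuousOn f (Ici 0) :=
    hG.div (hg₁c.pow 2) (fun t ht => pow_ne_zero 2 (g₁ne t ht))
  have rcont : ContinuousOn r (Ici 0) := hg₂c.div hg₁c g₁ne
  -- FTC: r t = ∫₀^t f
  have rt_eq : ∀ t : ℝ, 0 ≤ t → r t = ∫ s in (0:ℝ)..t, f s := by
    intro t ht
    have key : ∫ s in (0:ℝ)..t, f s = r t - r 0 := by
      apply intervalIntegral.integral_eq_sub_of_hasDeriv_right_of_le ht
        (rcont.mono (Icc_subset_Ici_self))
      · intro x hx
        exact (HDr x hx.1).hasDerivWithinAt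
      · apply ContinuousOn.intervalIntegrable
        apply fcont.mono
        rw [uIcc_of_le ht]
        exact Icc_subset_Ici_self
    have r0 : r 0 = 0 := by
      simp [hr, show g₂ 0 = 0 from h₂'0]
    rw [key, r0, sub_zero]
  -- integrability of f on (0, ∞)
  have fle : ∀ x ∈ Ioi (0:ℝ), f x ≤ G x := by
    intro x hx
    have hx' : (0:ℝ) ≤ x := (le_of_lt hx)
    have h1 : (1:ℝ) ≤ g₁ x ^ 2 := one_le_pow₀ (g₁ge x hx')
    calc f x = G x / g₁ x ^ 2 := rfl
      _ ≤ G x / 1 := by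
          apply div_le_div_of_nonneg_left (hGnn x hx') one_pos
          · exact h1
      _ = G x := div_one _
  have fnn : ∀ x ∈ Ioi (0:ℝ), 0 ≤ f x := fun x hx =>
    div_nonneg (hGnn x (Set.mem_Ici.mpr (le_of_lt hx))) (sq_nonneg _)
  have fint : IntegrableOn f (Ioi 0) := by
    apply hint.mono'
      ((fcont.mono Ioi_subset_Ici_self).aestronglyMeasurable measurableSet_Ioi)
    rw [ae_restrict_iff' measurableSet_Ioi]
    filter_upwards with x hx
    rw [Real.norm_eq_abs, abs_of_nonneg (fnn x hx)]
    exact fle x hx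
  set L : ℝ := ∫ s in Ioi (0:ℝ), f s with hL
  -- r tends to L
  have tend_r : Tendsto r atTop (𝓝 L) := by
    have h := intervalIntegral_tendsto_integral_Ioi 0 fint tendsto_id
    apply h.congr'
    filter_upwards [eventually_ge_atTop (0:ℝ)] with t ht
    exact (rt_eq t ht).symm
  -- L ≤ ∫ G
  have L_le : L ≤ ∫ t in Ioi (0:ℝ), G t :=
    setIntegral_mono_on fint hint measurableSet_Ioi fle
  -- h₂/h₁ = r + 1/(h₁ g₁) for t > 0
  have ratio_eq : ∀ t : ℝ, 0 < t → h₂ t / h₁ t = r t + 1 / (h₁ t * g₁ t) := by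
    intro t ht
    have h1 : h₁ t ≠ 0 := (h₁pos t ht).ne'
    have h2 : g₁ t ≠ 0 := (g₁pos t ht.le).ne'
    have hw := Wconst t ht.le
    simp only [hW] at hw
    have key : h₂ t / h₁ t - g₂ t / g₁ t = 1 / (h₁ t * g₁ t) := by
      rw [div_sub_div _ _ h1 h2,
        show h₂ t * g₁ t - h₁ t * g₂ t = 1 by linear_combination hw]
    have : r t = g₂ t / g₁ t := rfl
    rw [this]
    linarith [key]
  have tend_inv : Tendsto (fun t => 1 / (h₁ t * g₁ t)) atTop (𝓝 0) := by
    have hmono : Tendsto (fun t => h₁ t * g₁ t) atTop atTop := by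
      apply tendsto_atTop_mono' atTop ?_ tendsto_id
      filter_upwards [eventually_ge_atTop (0:ℝ)] with t ht
      calc (id t : ℝ) = t * 1 := (mul_one t).symm
        _ ≤ h₁ t * g₁ t :=
            mul_le_mul (h₁ge t ht) (g₁ge t ht) one_pos.le (h₁nn t ht)
    exact hmono.inv_tendsto_atTop.congr fun t => (one_div _).symm
  have tend_ratio : Tendsto (fun t => h₂ t / h₁ t) atTop (𝓝 L) := by
    have h := tend_r.add tend_inv
    rw [add_zero] at h
    apply h.congr'
    filter_upwards [eventually_gt_atTop (0:ℝ)] with t ht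
    exact (ratio_eq t ht).symm
  exact ⟨L, tend_ratio, tend_r, L_le⟩
end

section
/- For every t ≥ 0 one has (h₂'/h₁')'(t) = G(t)/h₁'(t)² ≥ 0, and if in addition ∫₀^∞ G(s) ds < ∞, then h₂'(t)/h₁'(t) ≤ ∫₀^∞ G(s) ds for all t ≥ 0. -/
open Set Filter MeasureTheory Topology

private lemma ftc0 {f f' : ℝ → ℝ} (hc : ContinuousOn f (Ici 0))
    (hd : ∀ s ∈ Ici (0:ℝ), HasDerivWithinAt f (f' s) (Ici 0) s)
    (hc' : ContinuousOn f' (Ici 0)) {t : ℝ} (ht : 0 ≤ t) :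
    f t - f 0 = ∫ s in (0:ℝ)..t, f' s := by
  refine (intervalIntegral.integral_eq_sub_of_hasDeriv_right_of_le ht
    (hc.mono Icc_subset_Ici_self) (fun x hx => ?_) ?_).symm
  · exact ((hd x hx.1.le).hasDerivAt (Ici_mem_nhds hx.1)).hasDerivWithinAt
  · exact (hc'.mono (by rw [uIcc_of_le ht]; exact Icc_subset_Ici_self)).intervalIntegrable

/-- `(h₂'/h₁')'(t) = G(t)/h₁'(t)² ≥ 0` on `[0,∞)`; if moreover `∫₀^∞ G < ∞` then
`h₂'/h₁' ≤ ∫₀^∞ G` on `[0,∞)`. -/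
theorem stmt_5 (G h₁ h₂ : ℝ → ℝ)
    (hG : ContinuousOn G (Ici 0)) (hGnn : ∀ t ∈ Ici (0 : ℝ), 0 ≤ G t)
    (hh₁ : ContDiffOn ℝ 2 h₁ (Ici 0)) (hh₂ : ContDiffOn ℝ 2 h₂ (Ici 0))
    (ode₁ : ∀ t ∈ Ici (0 : ℝ),
      derivWithin (derivWithin h₁ (Ici 0)) (Ici 0) t = G t * h₁ t)
    (ode₂ : ∀ t ∈ Ici (0 : ℝ),
      derivWithin (derivWithin h₂ (Ici 0)) (Ici 0) t = G t * h₂ t)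
    (h₁0 : h₁ 0 = 0) (h₁'0 : derivWithin h₁ (Ici 0) 0 = 1)
    (h₂0 : h₂ 0 = 1) (h₂'0 : derivWithin h₂ (Ici 0) 0 = 0)
    :
    (∀ t ∈ Ici (0 : ℝ),
      derivWithin (fun s => derivWithin h₂ (Ici 0) s / derivWithin h₁ (Ici 0) s)
          (Ici 0) t = G t / (derivWithin h₁ (Ici 0) t) ^ 2 ∧
      0 ≤ G t / (derivWithin h₁ (Ici 0) t) ^ 2) ∧
    (IntegrableOn G (Ioi 0) →
      ∀ t ∈ Ici (0 : ℝ),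
        derivWithin h₂ (Ici 0) t / derivWithin h₁ (Ici 0) t ≤
          ∫ s in Ioi (0 : ℝ), G s) := by
  have uD : UniqueDiffOn ℝ (Ici (0:ℝ)) := uniqueDiffOn_Ici 0
  set f₁ : ℝ → ℝ := derivWithin h₁ (Ici 0) with hf₁def
  set f₂ : ℝ → ℝ := derivWithin h₂ (Ici 0) with hf₂def
  have hc₁ : ContinuousOn h₁ (Ici (0:ℝ)) := hh₁.continuousOn
  have hc₂ : ContinuousOn h₂ (Ici (0:ℝ)) := hh₂.continuousOn
  have hd₁ : ContDiffOn ℝ 1 f₁ (Ici (0:ℝ)) := hh₁.derivWithin uD (by norm_num)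
  have hd₂ : ContDiffOn ℝ 1 f₂ (Ici (0:ℝ)) := hh₂.derivWithin uD (by norm_num)
  have f₁c : ContinuousOn f₁ (Ici (0:ℝ)) := hd₁.continuousOn
  have f₂c : ContinuousOn f₂ (Ici (0:ℝ)) := hd₂.continuousOn
  have f₁diff : DifferentiableOn ℝ f₁ (Ici (0:ℝ)) := hd₁.differentiableOn (by norm_num)
  have f₂diff : DifferentiableOn ℝ f₂ (Ici (0:ℝ)) := hd₂.differentiableOn (by norm_num)
  -- h₁ has derivative f₁, h₂ has derivative f₂
  have hder₁0 : ∀ t ∈ Ici (0:ℝ), HasDerivWithinAt h₁ (f₁ t) (Ici 0) t :=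
    fun t ht => ((hh₁.differentiableOn (by norm_num)) t ht).hasDerivWithinAt
  have hder₂0 : ∀ t ∈ Ici (0:ℝ), HasDerivWithinAt h₂ (f₂ t) (Ici 0) t :=
    fun t ht => ((hh₂.differentiableOn (by norm_num)) t ht).hasDerivWithinAt
  -- f₁ has derivative G * h₁, f₂ has derivative G * h₂
  have hder₁ : ∀ t ∈ Ici (0:ℝ), HasDerivWithinAt f₁ (G t * h₁ t) (Ici 0) t := by
    intro t ht
    have := (f₁diff t ht).hasDerivWithinAt
    rwa [ode₁ t ht] at this
  have hder₂ : ∀ t ∈ Ici (0:ℝ), HasDerivWithinAt f₂ (G t * h₂ t) (Ici 0) t := by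
    intro t ht
    have := (f₂diff t ht).hasDerivWithinAt
    rwa [ode₂ t ht] at this
  have hGh₁c : ContinuousOn (fun s => G s * h₁ s) (Ici (0:ℝ)) := hG.mul hc₁
  -- Step A: h₁ ≥ 0 on [0, ∞)
  have key : ∀ t ∈ Ici (0:ℝ), 0 ≤ h₁ t := by
    by_contra hcon
    push_neg at hcon
    obtain ⟨t₀, ht₀, hneg⟩ := hcon
    have ht₀' : 0 < t₀ := lt_of_le_of_ne ht₀ (by rintro rfl; rw [h₁0] at hneg; linarith)
    set S : Set ℝ := {t : ℝ | 0 < t ∧ h₁ t ≤ 0} with hSdef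
    have hSne : S.Nonempty := ⟨t₀, ht₀', hneg.le⟩
    have hSbdd : BddBelow S := ⟨0, fun x hx => hx.1.le⟩
    -- near 0, h₁ is positive
    have hs0 : HasDerivWithinAt h₁ 1 (Ici 0) 0 := by
      have := hder₁0 0 Set.self_mem_Ici; rwa [h₁'0] at this
    have hslope : Tendsto (slope h₁ 0) (𝓝[(Ici (0:ℝ)) \ {0}] 0) (𝓝 1) :=
      hasDerivWithinAt_iff_tendsto_slope.mp hs0
    have hev : ∀ᶠ s in 𝓝[(Ici (0:ℝ)) \ {0}] 0, 0 < slope h₁ 0 s :=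
      hslope.eventually (eventually_gt_nhds one_pos)
    obtain ⟨ε, hε, hball⟩ := Metric.mem_nhdsWithin_iff.mp hev
    have hSε : ∀ s ∈ S, ε ≤ s := by
      intro s hs
      by_contra hlt
      push_neg at hlt
      have hmem : s ∈ (Ici (0:ℝ)) \ {0} := ⟨hs.1.le, by simp [ne_of_gt hs.1]⟩
      have hdist : dist s 0 < ε := by
        rw [Real.dist_eq, sub_zero, abs_of_pos hs.1]; exact hlt
      have hpos : 0 < h₁ s / s := by
        have := hball ⟨Metric.mem_ball.mpr hdist, hmem⟩
        simpa [slope_def_field, h₁0] using this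
      rcases div_pos_iff.mp hpos with ⟨h1, _⟩ | ⟨_, h2⟩
      · linarith [hs.2]
      · linarith [hs.1]
    set c : ℝ := sInf S with hcdef
    have hcpos : 0 < c := lt_of_lt_of_le hε (le_csInf hSne hSε)
    -- h₁ s ≥ s for s ∈ [0, c)
    have hpos_lt : ∀ s, 0 ≤ s → s < c → s ≤ h₁ s := by
      intro s hs0' hsc
      -- h₁ ≥ 0 on [0, s]
      have hnn : ∀ u ∈ Icc (0:ℝ) s, 0 ≤ h₁ u := by
        intro u hu
        rcases eq_or_lt_of_le hu.1 with h | h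
        · rw [← h, h₁0]
        · by_contra hneg'
          push_neg at hneg'
          have : u ∈ S := ⟨h, hneg'.le⟩
          have := csInf_le hSbdd this
          have : u ≤ s := hu.2
          linarith
      -- f₁ ≥ 1 on [0, s]
      have hf₁ge : ∀ u ∈ Icc (0:ℝ) s, 1 ≤ f₁ u := by
        intro u hu
        have := ftc0 f₁c hder₁ hGh₁c hu.1
        have hnn' : 0 ≤ ∫ v in (0:ℝ)..u, G v * h₁ v := by
          apply intervalIntegral.integral_nonneg hu.1
          intro v hv
          exact mul_nonneg (hGnn v hv.1) (hnn v ⟨hv.1, hv.2.trans hu.2⟩)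
        rw [h₁'0] at this
        linarith
      have := ftc0 hc₁ hder₁0 f₁c hs0'
      rw [h₁0, sub_zero] at this
      rw [this]
      calc s = ∫ _ in (0:ℝ)..s, (1:ℝ) := by simp
        _ ≤ ∫ v in (0:ℝ)..s, f₁ v := by
            apply intervalIntegral.integral_mono_on hs0'
              (by simp [intervalIntegrable_const])
              ((f₁c.mono (by rw [uIcc_of_le hs0']; exact Icc_subset_Ici_self)).intervalIntegrable)
            exact hf₁ge
    -- h₁ c ≤ 0 via sequence in S tending to c
    have hcS : h₁ c ≤ 0 := by
      have hmem : c ∈ closure S := csInf_mem_closure hSne hSbdd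
      obtain ⟨u, hu, hulim⟩ := mem_closure_iff_seq_limit.mp hmem
      have hcont : ContinuousAt h₁ c :=
        (hc₁ c hcpos.le).continuousAt (Ici_mem_nhds hcpos)
      exact le_of_tendsto (hcont.tendsto.comp hulim) (Eventually.of_forall fun n => (hu n).2)
    -- h₁ c ≥ c via limit from the left
    have hcge : c ≤ h₁ c := by
      have hcont : ContinuousAt h₁ c :=
        (hc₁ c hcpos.le).continuousAt (Ici_mem_nhds hcpos)
      have h1 : Tendsto (fun s : ℝ => s) (𝓝[<] c) (𝓝 c) := tendsto_id.mono_left nhdsWithin_le_nhds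
      have h2 : Tendsto h₁ (𝓝[<] c) (𝓝 (h₁ c)) := hcont.tendsto.mono_left nhdsWithin_le_nhds
      have hev2 : ∀ᶠ s in 𝓝[<] c, s ≤ h₁ s := by
        filter_upwards [Ioo_mem_nhdsLT_of_mem (⟨hcpos, le_rfl⟩ : c ∈ Ioc (0:ℝ) c)] with s hs
        exact hpos_lt s hs.1.le hs.2
      exact le_of_tendsto_of_tendsto h1 h2 hev2
    linarith
  -- Step B: f₁ ≥ 1 on [0, ∞)
  have hf₁one : ∀ t ∈ Ici (0:ℝ), 1 ≤ f₁ t := by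
    intro t ht
    have := ftc0 f₁c hder₁ hGh₁c ht
    have hnn' : 0 ≤ ∫ v in (0:ℝ)..t, G v * h₁ v := by
      apply intervalIntegral.integral_nonneg ht
      intro v hv
      exact mul_nonneg (hGnn v hv.1) (key v hv.1)
    rw [h₁'0] at this
    linarith
  have hf₁ne : ∀ t ∈ Ici (0:ℝ), f₁ t ≠ 0 := fun t ht => by linarith [hf₁one t ht]
  -- Step C: Wronskian ≡ 1
  have hW : ∀ t ∈ Ici (0:ℝ), h₂ t * f₁ t - f₂ t * h₁ t = 1 := by
    have hWder : ∀ t ∈ Ici (0:ℝ),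
        HasDerivWithinAt (fun s => h₂ s * f₁ s - f₂ s * h₁ s) 0 (Ici 0) t := by
      intro t ht
      have := ((hder₂0 t ht).mul (hder₁ t ht)).sub ((hder₂ t ht).mul (hder₁0 t ht))
      have heq : f₂ t * f₁ t + h₂ t * (G t * h₁ t) - (G t * h₂ t * h₁ t + f₂ t * f₁ t)
          = 0 := by ring
      rwa [heq] at this
    have hWc : ContinuousOn (fun s => h₂ s * f₁ s - f₂ s * h₁ s) (Ici (0:ℝ)) :=
      (hc₂.mul f₁c).sub (f₂c.mul hc₁)
    intro t ht
    have := ftc0 hWc hWder continuousOn_const ht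
    simp only [intervalIntegral.integral_zero] at this
    have h0 : h₂ 0 * f₁ 0 - f₂ 0 * h₁ 0 = 1 := by
      rw [h₁'0, h₂'0, h₂0, h₁0]; ring
    linarith
  -- Step D: derivative of f₂/f₁
  have hqder : ∀ t ∈ Ici (0:ℝ),
      HasDerivWithinAt (fun s => f₂ s / f₁ s) (G t / f₁ t ^ 2) (Ici 0) t := by
    intro t ht
    have := (hder₂ t ht).div (hder₁ t ht) (hf₁ne t ht)
    have heq : (G t * h₂ t * f₁ t - f₂ t * (G t * h₁ t)) / f₁ t ^ 2
        = G t / f₁ t ^ 2 := by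
      have : G t * h₂ t * f₁ t - f₂ t * (G t * h₁ t)
          = G t * (h₂ t * f₁ t - f₂ t * h₁ t) := by ring
      rw [this, hW t ht, mul_one]
    rwa [heq] at this
  constructor
  · intro t ht
    refine ⟨(hqder t ht).derivWithin (uD t ht), ?_⟩
    apply div_nonneg (hGnn t ht)
    positivity
  · intro hGint t ht
    have hqc : ContinuousOn (fun s => f₂ s / f₁ s) (Ici (0:ℝ)) := f₂c.div f₁c hf₁ne
    have hq'c : ContinuousOn (fun s => G s / f₁ s ^ 2) (Ici (0:ℝ)) :=
      hG.div (f₁c.pow 2) (fun s hs => pow_ne_zero 2 (hf₁ne s hs))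
    have hftc := ftc0 hqc hqder hq'c ht
    have h0 : f₂ 0 / f₁ 0 = 0 := by rw [h₁'0, h₂'0]; norm_num
    rw [h0, sub_zero] at hftc
    rw [hftc]
    have step1 : (∫ s in (0:ℝ)..t, G s / f₁ s ^ 2) ≤ ∫ s in (0:ℝ)..t, G s := by
      apply intervalIntegral.integral_mono_on ht
        ((hq'c.mono (by rw [uIcc_of_le ht]; exact Icc_subset_Ici_self)).intervalIntegrable)
        ((hG.mono (by rw [uIcc_of_le ht]; exact Icc_subset_Ici_self)).intervalIntegrable)
      intro u hu
      have h1 : 1 ≤ f₁ u ^ 2 := by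
        have := hf₁one u hu.1; nlinarith
      exact div_le_self (hGnn u hu.1) h1
    have step2 : (∫ s in (0:ℝ)..t, G s) ≤ ∫ s in Ioi (0:ℝ), G s := by
      rw [intervalIntegral.integral_of_le ht]
      apply setIntegral_mono_set hGint
      · filter_upwards [ae_restrict_mem measurableSet_Ioi] with x hx
        exact hGnn x (mem_Ici.mpr (le_of_lt hx))
      · exact HasSubset.Subset.eventuallyLE Ioc_subset_Ioi_self
    linarith
end

section
/- For every t > 0 one has h₂(t)/h₁(t) = h₂'(t)/h₁'(t) + 1/(h₁(t)·h₁'(t)), and if in addition ∫₀^∞ G(s) ds < ∞, then h₂(t)/h₁(t) ≤ ∫₀^∞ G(s) ds + 1/t for all t > 0. -/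
open Set Filter MeasureTheory Topology

lemma my_ftc {f f' : ℝ → ℝ} {a b : ℝ} (hab : a ≤ b) (hcont : ContinuousOn f (Icc a b))
    (hderiv : ∀ x ∈ Ioo a b, HasDerivAt f (f' x) x)
    (hint : IntervalIntegrable f' volume a b) : f b - f a = ∫ y in a..b, f' y :=
  (intervalIntegral.integral_eq_sub_of_hasDeriv_right_of_le hab hcont
    (fun x hx => (hderiv x hx).hasDerivWithinAt) hint).symm

lemma my_hasDerivAt {f : ℝ → ℝ} (hf : DifferentiableOn ℝ f (Ici 0)) {t : ℝ} (ht : 0 < t) :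
    HasDerivAt f (derivWithin f (Ici 0) t) t := by
  have hnhds : Ici (0:ℝ) ∈ 𝓝 t := Ici_mem_nhds ht
  have hdiff : DifferentiableAt ℝ f t := (hf t ht.le).differentiableAt hnhds
  have := hdiff.hasDerivAt
  rwa [derivWithin_of_mem_nhds hnhds]

section main
variable (G h₁ : ℝ → ℝ)

lemma aux_pos (hG : ContinuousOn G (Ici 0)) (hGnn : ∀ t ∈ Ici (0 : ℝ), 0 ≤ G t)
    (hh₁ : ContDiffOn ℝ 2 h₁ (Ici 0))
    (ode₁ : ∀ t ∈ Ici (0 : ℝ),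
      derivWithin (derivWithin h₁ (Ici 0)) (Ici 0) t = G t * h₁ t)
    (h₁0 : h₁ 0 = 0) (h₁'0 : derivWithin h₁ (Ici 0) 0 = 1) :
    ∀ t ∈ Ioi (0 : ℝ), 0 < h₁ t := by
  have hu : UniqueDiffOn ℝ (Ici (0:ℝ)) := uniqueDiffOn_Ici 0
  have hc₁ : ContinuousOn h₁ (Ici 0) := hh₁.continuousOn
  have hd₁ : ContDiffOn ℝ 1 (derivWithin h₁ (Ici 0)) (Ici 0) :=
    hh₁.derivWithin hu (by norm_num)
  have hc₁' : ContinuousOn (derivWithin h₁ (Ici 0)) (Ici 0) := hd₁.continuousOn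
  have hder₁' : ∀ t ∈ Ioi (0:ℝ), HasDerivAt (derivWithin h₁ (Ici 0)) (G t * h₁ t) t := by
    intro t ht
    have h := my_hasDerivAt (hd₁.differentiableOn one_ne_zero) ht
    rwa [ode₁ t (mem_Ici.mpr (le_of_lt ht))] at h
  by_contra hcon
  push_neg at hcon
  obtain ⟨t₀, ht₀, ht₀'⟩ := hcon
  -- h₁ is positive near 0
  have hdw : HasDerivWithinAt h₁ 1 (Ici 0) 0 := by
    have := ((hh₁.differentiableOn (by norm_num)) 0 self_mem_Ici).hasDerivWithinAt
    rwa [h₁'0] at this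
  have hslope : Tendsto (slope h₁ 0) (𝓝[>] (0:ℝ)) (𝓝 1) := by
    have := hasDerivWithinAt_iff_tendsto_slope.mp hdw
    rwa [Ici_sdiff_left] at this
  have hev : ∀ᶠ x in 𝓝[>] (0:ℝ), 0 < slope h₁ 0 x :=
    hslope.eventually (eventually_gt_nhds one_pos)
  obtain ⟨s₀, hs₀mem, hs₀⟩ := eventually_iff_exists_mem.mp hev
  obtain ⟨u, hu0, huI⟩ := mem_nhdsGT_iff_exists_Ioc_subset.mp hs₀mem
  have hupos : (0:ℝ) < u := hu0
  have hnear : ∀ x ∈ Ioc (0:ℝ) u, 0 < h₁ x := by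
    intro x hx
    have h' := hs₀ x (huI hx)
    rw [slope_def_field, h₁0] at h'
    have hx0 : (0:ℝ) < x := hx.1
    rw [div_pos_iff] at h'
    rcases h' with ⟨h1, _⟩ | ⟨_, h2⟩ <;> linarith
  -- infimum of the "nonpositive" set
  set S : Set ℝ := {t : ℝ | 0 < t ∧ h₁ t ≤ 0} with hSdef
  have hSne : S.Nonempty := ⟨t₀, ht₀, ht₀'⟩
  have hSbdd : BddBelow S := ⟨0, fun s hs => hs.1.le⟩
  set b : ℝ := sInf S with hbdef
  have hub : u ≤ b := by
    apply le_csInf hSne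
    intro s hs
    by_contra hlt
    push_neg at hlt
    exact absurd hs.2 (not_le.2 (hnear s ⟨hs.1, hlt.le⟩))
  have hb0 : (0:ℝ) < b := lt_of_lt_of_le hupos hub
  have hble : ∀ s ∈ S, b ≤ s := fun s hs => csInf_le hSbdd hs
  have hbS_le : h₁ b ≤ 0 := by
    by_contra hposb
    push_neg at hposb
    have hcont : ContinuousAt h₁ b := (hc₁ b hb0.le).continuousAt (Ici_mem_nhds hb0)
    have hev2 : ∀ᶠ x in 𝓝 b, 0 < h₁ x := hcont.eventually (eventually_gt_nhds hposb)
    obtain ⟨δ, hδ0, hδ⟩ := Metric.eventually_nhds_iff.mp hev2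
    obtain ⟨s, hsS, hslt⟩ := exists_lt_of_csInf_lt hSne (by linarith : b < b + δ)
    have hbs : b ≤ s := hble s hsS
    have : 0 < h₁ s := hδ (by rw [Real.dist_eq]; rw [abs_of_nonneg (by linarith)]; linarith)
    exact absurd hsS.2 (not_le.2 this)
  have hb_nonneg : 0 ≤ h₁ b := by
    by_contra hnegb
    push_neg at hnegb
    have hcont : ContinuousAt h₁ b := (hc₁ b hb0.le).continuousAt (Ici_mem_nhds hb0)
    have hev2 : ∀ᶠ x in 𝓝 b, h₁ x < 0 := hcont.eventually (eventually_lt_nhds hnegb)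
    obtain ⟨δ, hδ0, hδ⟩ := Metric.eventually_nhds_iff.mp hev2
    set s : ℝ := max (b - δ/2) (b/2) with hsdef
    have hs_lt_b : s < b := by
      apply max_lt <;> linarith
    have hs_pos : 0 < s := lt_of_lt_of_le (by linarith) (le_max_right _ _)
    have hdist : dist s b < δ := by
      rw [Real.dist_eq, abs_of_nonpos (by linarith)]
      have : b - δ/2 ≤ s := le_max_left _ _
      linarith
    have hsS : s ∈ S := ⟨hs_pos, (hδ hdist).le⟩
    exact absurd (hble s hsS) (not_le.2 hs_lt_b)
  have hIcc : ∀ s ∈ Icc (0:ℝ) b, 0 ≤ h₁ s := by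
    intro s hs
    rcases eq_or_lt_of_le hs.1 with h0 | h0
    · rw [← h0, h₁0]
    rcases eq_or_lt_of_le hs.2 with hb' | hb'
    · rwa [hb']
    by_contra hneg
    push_neg at hneg
    exact absurd (hble s ⟨h0, hneg.le⟩) (not_le.2 hb')
  -- derivWithin h₁ ≥ 1 on [0, b]
  have hd1ge : ∀ s ∈ Icc (0:ℝ) b, 1 ≤ derivWithin h₁ (Ici 0) s := by
    intro s hs
    have hint : IntervalIntegrable (fun y => G y * h₁ y) volume 0 s := by
      apply ContinuousOn.intervalIntegrable_of_Icc hs.1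
      exact ((hG.mono (Icc_subset_Ici_self)).mul (hc₁.mono (Icc_subset_Ici_self)))
    have heq : derivWithin h₁ (Ici 0) s - derivWithin h₁ (Ici 0) 0
        = ∫ y in (0:ℝ)..s, G y * h₁ y := by
      apply my_ftc hs.1 (hc₁'.mono Icc_subset_Ici_self)
      · intro x hx; exact hder₁' x hx.1
      · exact hint
    have hnn : 0 ≤ ∫ y in (0:ℝ)..s, G y * h₁ y := by
      apply intervalIntegral.integral_nonneg hs.1
      intro x hx
      exact mul_nonneg (hGnn x hx.1) (hIcc x ⟨hx.1, hx.2.trans hs.2⟩)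
    rw [h₁'0] at heq
    linarith
  -- h₁ b ≥ b
  have hintd : IntervalIntegrable (derivWithin h₁ (Ici 0)) volume 0 b :=
    ContinuousOn.intervalIntegrable_of_Icc hb0.le (hc₁'.mono (Icc_subset_Ici_self))
  have heq2 : h₁ b - h₁ 0 = ∫ y in (0:ℝ)..b, derivWithin h₁ (Ici 0) y := by
    apply my_ftc hb0.le (hc₁.mono Icc_subset_Ici_self)
    · intro x hx
      exact my_hasDerivAt (hh₁.differentiableOn (by norm_num)) hx.1
    · exact hintd
  have hge : (∫ y in (0:ℝ)..b, (1:ℝ)) ≤ ∫ y in (0:ℝ)..b, derivWithin h₁ (Ici 0) y := by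
    apply intervalIntegral.integral_mono_on hb0.le intervalIntegrable_const hintd
    exact hd1ge
  simp only [intervalIntegral.integral_const, smul_eq_mul, sub_zero, mul_one] at hge
  rw [h₁0, sub_zero] at heq2
  linarith

lemma aux_ge (hG : ContinuousOn G (Ici 0)) (hGnn : ∀ t ∈ Ici (0 : ℝ), 0 ≤ G t)
    (hh₁ : ContDiffOn ℝ 2 h₁ (Ici 0))
    (ode₁ : ∀ t ∈ Ici (0 : ℝ),
      derivWithin (derivWithin h₁ (Ici 0)) (Ici 0) t = G t * h₁ t)
    (h₁0 : h₁ 0 = 0) (h₁'0 : derivWithin h₁ (Ici 0) 0 = 1) :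
    ∀ t ∈ Ici (0 : ℝ), 1 ≤ derivWithin h₁ (Ici 0) t ∧ t ≤ h₁ t := by
  have hu : UniqueDiffOn ℝ (Ici (0:ℝ)) := uniqueDiffOn_Ici 0
  have hc₁ : ContinuousOn h₁ (Ici 0) := hh₁.continuousOn
  have hd₁ : ContDiffOn ℝ 1 (derivWithin h₁ (Ici 0)) (Ici 0) :=
    hh₁.derivWithin hu (by norm_num)
  have hc₁' : ContinuousOn (derivWithin h₁ (Ici 0)) (Ici 0) := hd₁.continuousOn
  have hder₁' : ∀ t ∈ Ioi (0:ℝ), HasDerivAt (derivWithin h₁ (Ici 0)) (G t * h₁ t) t := by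
    intro t ht
    have h := my_hasDerivAt (hd₁.differentiableOn one_ne_zero) ht
    rwa [ode₁ t (mem_Ici.mpr (le_of_lt ht))] at h
  have hpos := aux_pos G h₁ hG hGnn hh₁ ode₁ h₁0 h₁'0
  have hnn : ∀ s ∈ Ici (0:ℝ), 0 ≤ h₁ s := by
    intro s hs
    rcases eq_or_lt_of_le (mem_Ici.mp hs) with h | h
    · rw [← h, h₁0]
    · exact (hpos s h).le
  intro t ht
  have hd1ge : ∀ s ∈ Icc (0:ℝ) t, 1 ≤ derivWithin h₁ (Ici 0) s := by
    intro s hs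
    have hint : IntervalIntegrable (fun y => G y * h₁ y) volume 0 s :=
      ContinuousOn.intervalIntegrable_of_Icc hs.1
        ((hG.mono Icc_subset_Ici_self).mul (hc₁.mono Icc_subset_Ici_self))
    have heq : derivWithin h₁ (Ici 0) s - derivWithin h₁ (Ici 0) 0
        = ∫ y in (0:ℝ)..s, G y * h₁ y := by
      apply my_ftc hs.1 (hc₁'.mono Icc_subset_Ici_self)
      · intro x hx; exact hder₁' x hx.1
      · exact hint
    have hnn' : 0 ≤ ∫ y in (0:ℝ)..s, G y * h₁ y := by
      apply intervalIntegral.integral_nonneg hs.1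
      intro x hx
      exact mul_nonneg (hGnn x hx.1) (hnn x hx.1)
    rw [h₁'0] at heq
    linarith
  refine ⟨hd1ge t ⟨ht, le_rfl⟩, ?_⟩
  have hintd : IntervalIntegrable (derivWithin h₁ (Ici 0)) volume 0 t :=
    ContinuousOn.intervalIntegrable_of_Icc ht (hc₁'.mono Icc_subset_Ici_self)
  have heq2 : h₁ t - h₁ 0 = ∫ y in (0:ℝ)..t, derivWithin h₁ (Ici 0) y := by
    apply my_ftc ht (hc₁.mono Icc_subset_Ici_self)
    · intro x hx
      exact my_hasDerivAt (hh₁.differentiableOn (by norm_num)) hx.1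
    · exact hintd
  have hge : (∫ y in (0:ℝ)..t, (1:ℝ)) ≤ ∫ y in (0:ℝ)..t, derivWithin h₁ (Ici 0) y :=
    intervalIntegral.integral_mono_on ht intervalIntegrable_const hintd hd1ge
  simp only [intervalIntegral.integral_const, smul_eq_mul, sub_zero, mul_one] at hge
  rw [h₁0, sub_zero] at heq2
  linarith
end main

section wronskian
variable (G h₁ h₂ : ℝ → ℝ)

lemma aux_wronskian (hG : ContinuousOn G (Ici 0))
    (hh₁ : ContDiffOn ℝ 2 h₁ (Ici 0)) (hh₂ : ContDiffOn ℝ 2 h₂ (Ici 0))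
    (ode₁ : ∀ t ∈ Ici (0 : ℝ),
      derivWithin (derivWithin h₁ (Ici 0)) (Ici 0) t = G t * h₁ t)
    (ode₂ : ∀ t ∈ Ici (0 : ℝ),
      derivWithin (derivWithin h₂ (Ici 0)) (Ici 0) t = G t * h₂ t)
    (h₁0 : h₁ 0 = 0) (h₁'0 : derivWithin h₁ (Ici 0) 0 = 1)
    (h₂0 : h₂ 0 = 1) (h₂'0 : derivWithin h₂ (Ici 0) 0 = 0) :
    ∀ t ∈ Ici (0 : ℝ),
      derivWithin h₁ (Ici 0) t * h₂ t - h₁ t * derivWithin h₂ (Ici 0) t = 1 := by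
  have hu : UniqueDiffOn ℝ (Ici (0:ℝ)) := uniqueDiffOn_Ici 0
  have hc₁ : ContinuousOn h₁ (Ici 0) := hh₁.continuousOn
  have hc₂ : ContinuousOn h₂ (Ici 0) := hh₂.continuousOn
  have hd₁ : ContDiffOn ℝ 1 (derivWithin h₁ (Ici 0)) (Ici 0) :=
    hh₁.derivWithin hu (by norm_num)
  have hd₂ : ContDiffOn ℝ 1 (derivWithin h₂ (Ici 0)) (Ici 0) :=
    hh₂.derivWithin hu (by norm_num)
  have hc₁' : ContinuousOn (derivWithin h₁ (Ici 0)) (Ici 0) := hd₁.continuousOn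
  have hc₂' : ContinuousOn (derivWithin h₂ (Ici 0)) (Ici 0) := hd₂.continuousOn
  intro t ht
  rcases eq_or_lt_of_le (mem_Ici.mp ht) with h0 | h0
  · rw [← h0, h₁0, h₁'0, h₂0, h₂'0]; ring
  set W : ℝ → ℝ := fun s =>
    derivWithin h₁ (Ici 0) s * h₂ s - h₁ s * derivWithin h₂ (Ici 0) s with hWdef
  have hWc : ContinuousOn W (Icc 0 t) :=
    (((hc₁'.mul hc₂).sub (hc₁.mul hc₂')).mono Icc_subset_Ici_self)
  have hWd : ∀ x ∈ Ioo (0:ℝ) t, HasDerivAt W 0 x := by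
    intro x hx
    have hx0 : (0:ℝ) < x := hx.1
    have d1 := my_hasDerivAt (hh₁.differentiableOn (by norm_num)) hx0
    have d2 := my_hasDerivAt (hh₂.differentiableOn (by norm_num)) hx0
    have d1' : HasDerivAt (derivWithin h₁ (Ici 0)) (G x * h₁ x) x := by
      have h := my_hasDerivAt (hd₁.differentiableOn one_ne_zero) hx0
      rwa [ode₁ x hx0.le] at h
    have d2' : HasDerivAt (derivWithin h₂ (Ici 0)) (G x * h₂ x) x := by
      have h := my_hasDerivAt (hd₂.differentiableOn one_ne_zero) hx0
      rwa [ode₂ x hx0.le] at h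
    have := (d1'.mul d2).sub (d1.mul d2')
    have hz : G x * h₁ x * h₂ x + derivWithin h₁ (Ici 0) x * derivWithin h₂ (Ici 0) x -
        (derivWithin h₁ (Ici 0) x * derivWithin h₂ (Ici 0) x + h₁ x * (G x * h₂ x)) = 0 := by
      ring
    rw [hz] at this
    exact this
  have heq : W t - W 0 = ∫ y in (0:ℝ)..t, (0:ℝ) :=
    my_ftc h0.le hWc hWd intervalIntegrable_const
  rw [intervalIntegral.integral_zero] at heq
  have hW0 : W 0 = 1 := by simp [hWdef, h₁0, h₁'0, h₂0, h₂'0]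
  have : W t = 1 := by linarith
  simpa [hWdef] using this
end wronskian

/-- `h₂/h₁ = h₂'/h₁' + 1/(h₁ h₁')` on `(0,∞)`; if moreover `∫₀^∞ G < ∞` then
`h₂(t)/h₁(t) ≤ ∫₀^∞ G + 1/t` for all `t > 0`. -/
theorem stmt_6 (G h₁ h₂ : ℝ → ℝ)
    (hG : ContinuousOn G (Ici 0)) (hGnn : ∀ t ∈ Ici (0 : ℝ), 0 ≤ G t)
    (hh₁ : ContDiffOn ℝ 2 h₁ (Ici 0)) (hh₂ : ContDiffOn ℝ 2 h₂ (Ici 0))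
    (ode₁ : ∀ t ∈ Ici (0 : ℝ),
      derivWithin (derivWithin h₁ (Ici 0)) (Ici 0) t = G t * h₁ t)
    (ode₂ : ∀ t ∈ Ici (0 : ℝ),
      derivWithin (derivWithin h₂ (Ici 0)) (Ici 0) t = G t * h₂ t)
    (h₁0 : h₁ 0 = 0) (h₁'0 : derivWithin h₁ (Ici 0) 0 = 1)
    (h₂0 : h₂ 0 = 1) (h₂'0 : derivWithin h₂ (Ici 0) 0 = 0)
    :
    (∀ t ∈ Ioi (0 : ℝ),
      h₂ t / h₁ t = derivWithin h₂ (Ici 0) t / derivWithin h₁ (Ici 0) t +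
        1 / (h₁ t * derivWithin h₁ (Ici 0) t)) ∧
    (IntegrableOn G (Ioi 0) →
      ∀ t ∈ Ioi (0 : ℝ),
        h₂ t / h₁ t ≤ (∫ s in Ioi (0 : ℝ), G s) + 1 / t) := by
  have hu : UniqueDiffOn ℝ (Ici (0:ℝ)) := uniqueDiffOn_Ici 0
  have hc₁ : ContinuousOn h₁ (Ici 0) := hh₁.continuousOn
  have hc₂ : ContinuousOn h₂ (Ici 0) := hh₂.continuousOn
  have hd₁ : ContDiffOn ℝ 1 (derivWithin h₁ (Ici 0)) (Ici 0) :=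
    hh₁.derivWithin hu (by norm_num)
  have hd₂ : ContDiffOn ℝ 1 (derivWithin h₂ (Ici 0)) (Ici 0) :=
    hh₂.derivWithin hu (by norm_num)
  have hc₁' : ContinuousOn (derivWithin h₁ (Ici 0)) (Ici 0) := hd₁.continuousOn
  have hc₂' : ContinuousOn (derivWithin h₂ (Ici 0)) (Ici 0) := hd₂.continuousOn
  have hpos := aux_pos G h₁ hG hGnn hh₁ ode₁ h₁0 h₁'0
  have hge := aux_ge G h₁ hG hGnn hh₁ ode₁ h₁0 h₁'0
  have hW := aux_wronskian G h₁ h₂ hG hh₁ hh₂ ode₁ ode₂ h₁0 h₁'0 h₂0 h₂'0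
  have hpart1 : ∀ t ∈ Ioi (0 : ℝ),
      h₂ t / h₁ t = derivWithin h₂ (Ici 0) t / derivWithin h₁ (Ici 0) t +
        1 / (h₁ t * derivWithin h₁ (Ici 0) t) := by
    intro t ht
    have h1pos : 0 < h₁ t := hpos t ht
    have h1'ge : 1 ≤ derivWithin h₁ (Ici 0) t := (hge t (mem_Ici.mpr (le_of_lt ht))).1
    have h1ne : h₁ t ≠ 0 := ne_of_gt h1pos
    have h1'ne : derivWithin h₁ (Ici 0) t ≠ 0 := by linarith
    have hWt := hW t (mem_Ici.mpr (le_of_lt ht))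
    field_simp
    linear_combination hWt
  refine ⟨hpart1, ?_⟩
  intro hGint t ht
  have htpos : (0:ℝ) < t := ht
  have h1pos : 0 < h₁ t := hpos t ht
  have h1'ge : 1 ≤ derivWithin h₁ (Ici 0) t := (hge t htpos.le).1
  have h1get : t ≤ h₁ t := (hge t htpos.le).2
  -- the ratio of derivatives equals an integral
  have h1'ne : ∀ s ∈ Icc (0:ℝ) t, derivWithin h₁ (Ici 0) s ≠ 0 := by
    intro s hs
    have := (hge s hs.1).1
    linarith
  have hRc : ContinuousOn
      (fun s => derivWithin h₂ (Ici 0) s / derivWithin h₁ (Ici 0) s) (Icc 0 t) :=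
    (hc₂'.mono Icc_subset_Ici_self).div (hc₁'.mono Icc_subset_Ici_self) h1'ne
  have hRd : ∀ x ∈ Ioo (0:ℝ) t,
      HasDerivAt (fun s => derivWithin h₂ (Ici 0) s / derivWithin h₁ (Ici 0) s)
        (G x / (derivWithin h₁ (Ici 0) x) ^ 2) x := by
    intro x hx
    have hx0 : (0:ℝ) < x := hx.1
    have d1' : HasDerivAt (derivWithin h₁ (Ici 0)) (G x * h₁ x) x := by
      have h := my_hasDerivAt (hd₁.differentiableOn one_ne_zero) hx0
      rwa [ode₁ x hx0.le] at h
    have d2' : HasDerivAt (derivWithin h₂ (Ici 0)) (G x * h₂ x) x := by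
      have h := my_hasDerivAt (hd₂.differentiableOn one_ne_zero) hx0
      rwa [ode₂ x hx0.le] at h
    have hne : derivWithin h₁ (Ici 0) x ≠ 0 := h1'ne x ⟨hx0.le, hx.2.le⟩
    have hdd := d2'.div d1' hne
    have hnum : G x * h₂ x * derivWithin h₁ (Ici 0) x
        - derivWithin h₂ (Ici 0) x * (G x * h₁ x) = G x := by
      linear_combination G x * (hW x hx0.le)
    rwa [hnum] at hdd
  have hintf' : IntervalIntegrable
      (fun x => G x / (derivWithin h₁ (Ici 0) x) ^ 2) volume 0 t := by
    apply ContinuousOn.intervalIntegrable_of_Icc htpos.le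
    exact (hG.mono Icc_subset_Ici_self).div
      ((hc₁'.mono Icc_subset_Ici_self).pow 2)
      (fun x hx => pow_ne_zero _ (h1'ne x hx))
  have hintG : IntervalIntegrable G volume 0 t :=
    ContinuousOn.intervalIntegrable_of_Icc htpos.le (hG.mono Icc_subset_Ici_self)
  have heq : derivWithin h₂ (Ici 0) t / derivWithin h₁ (Ici 0) t
      - derivWithin h₂ (Ici 0) 0 / derivWithin h₁ (Ici 0) 0
      = ∫ x in (0:ℝ)..t, G x / (derivWithin h₁ (Ici 0) x) ^ 2 :=
    my_ftc htpos.le hRc hRd hintf'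
  rw [h₁'0, h₂'0] at heq
  norm_num at heq
  have hle1 : (∫ x in (0:ℝ)..t, G x / (derivWithin h₁ (Ici 0) x) ^ 2)
      ≤ ∫ x in (0:ℝ)..t, G x := by
    apply intervalIntegral.integral_mono_on htpos.le hintf' hintG
    intro x hx
    apply div_le_self (hGnn x hx.1)
    have := (hge x hx.1).1
    nlinarith
  have hle2 : (∫ x in (0:ℝ)..t, G x) ≤ ∫ s in Ioi (0:ℝ), G s := by
    rw [intervalIntegral.integral_of_le htpos.le]
    apply setIntegral_mono_set hGint
    · exact (ae_restrict_iff' measurableSet_Ioi).2 (ae_of_all _ fun x hx => hGnn x (mem_Ici.mpr (le_of_lt hx)))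
    · exact (Ioc_subset_Ioi_self).eventuallyLE
  have hfrac : 1 / (h₁ t * derivWithin h₁ (Ici 0) t) ≤ 1 / t := by
    apply one_div_le_one_div_of_le htpos
    nlinarith
  rw [hpart1 t ht]
  have : derivWithin h₂ (Ici 0) t / derivWithin h₁ (Ici 0) t ≤ ∫ s in Ioi (0:ℝ), G s := by
    rw [heq]; exact le_trans hle1 hle2
  linarith
end

section
/- If ∫₀^∞ s·G(s) ds < ∞, then for all t > 0 one has h₁(t) ≤ ∫₀^t exp(∫₀^s τ·G(τ) dτ) ds ≤ t·exp(∫₀^∞ τ·G(τ) dτ). -/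
open Set Filter MeasureTheory
open intervalIntegral Topology

lemma primCont {f : ℝ → ℝ} (hf : ContinuousOn f (Ici 0)) :
    ContinuousOn (fun u => ∫ s in (0:ℝ)..u, f s) (Ici 0) := by
  intro x hx
  have hb : (0:ℝ) ≤ x + 1 := by simp at hx; linarith
  have h1 : ContinuousOn (fun u => ∫ s in (0:ℝ)..u, f s) (Icc 0 (x+1)) := by
    have := continuousOn_primitive_interval (f := f) (μ := volume) (a := 0) (b := x+1)
      (by rw [uIcc_of_le hb]
          exact (hf.mono Icc_subset_Ici_self).integrableOn_compact isCompact_Icc)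
    rwa [uIcc_of_le hb] at this
  have hx' : x ∈ Icc (0:ℝ) (x+1) := ⟨hx, by linarith⟩
  refine (h1 x hx').mono_of_mem_nhdsWithin ?_
  have h2 : Icc (0:ℝ) (x+1) = Ici 0 ∩ Iic (x+1) := (Ici_inter_Iic).symm
  rw [h2]
  exact inter_mem_nhdsWithin _ (Iic_mem_nhds (by linarith))


/-- If `∫₀^∞ s G(s) ds < ∞` then for all `t > 0`,
`h₁(t) ≤ ∫₀^t exp(∫₀^s τ G(τ) dτ) ds ≤ t exp(∫₀^∞ τ G(τ) dτ)`. -/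
theorem stmt_8 (G h₁ : ℝ → ℝ)
    (hG : ContinuousOn G (Ici 0)) (hGnn : ∀ t ∈ Ici (0 : ℝ), 0 ≤ G t)
    (hh₁ : ContDiffOn ℝ 2 h₁ (Ici 0))
    (ode₁ : ∀ t ∈ Ici (0 : ℝ),
      derivWithin (derivWithin h₁ (Ici 0)) (Ici 0) t = G t * h₁ t)
    (h₁0 : h₁ 0 = 0) (h₁'0 : derivWithin h₁ (Ici 0) 0 = 1)
    (hint : IntegrableOn (fun s => s * G s) (Ioi 0)) :
    ∀ t ∈ Ioi (0 : ℝ),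
      h₁ t ≤ (∫ s in (0 : ℝ)..t, Real.exp (∫ τ in (0 : ℝ)..s, τ * G τ)) ∧
      (∫ s in (0 : ℝ)..t, Real.exp (∫ τ in (0 : ℝ)..s, τ * G τ)) ≤
        t * Real.exp (∫ τ in Ioi (0 : ℝ), τ * G τ) := by
  set g := derivWithin h₁ (Ici 0) with hgdef
  set f₀ : ℝ → ℝ := fun τ => τ * G τ with hf₀def
  set I : ℝ → ℝ := fun s => ∫ τ in (0:ℝ)..s, f₀ τ with hIdef
  -- basic facts
  have h₁c : ContinuousOn h₁ (Ici 0) := hh₁.continuousOn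
  have hgC1 : ContDiffOn ℝ 1 g (Ici 0) :=
    hh₁.derivWithin (uniqueDiffOn_Ici 0) (by norm_num)
  have hgc : ContinuousOn g (Ici 0) := hgC1.continuousOn
  have hd₁ : ∀ t ∈ Ici (0:ℝ), HasDerivWithinAt h₁ (g t) (Ici 0) t := by
    intro t ht
    exact (hh₁.differentiableOn (by norm_num) t ht).hasDerivWithinAt
  have hdg : ∀ t ∈ Ici (0:ℝ), HasDerivWithinAt g (G t * h₁ t) (Ici 0) t := by
    intro t ht
    have := (hgC1.differentiableOn (by norm_num) t ht).hasDerivWithinAt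
    rwa [(ode₁ t ht : derivWithin g (Ici 0) t = G t * h₁ t)] at this
  have hd₁' : ∀ t : ℝ, 0 < t → HasDerivAt h₁ (g t) t := fun t ht =>
    (hd₁ t ht.le).hasDerivAt (Ici_mem_nhds ht)
  have hdg' : ∀ t : ℝ, 0 < t → HasDerivAt g (G t * h₁ t) t := fun t ht =>
    (hdg t ht.le).hasDerivAt (Ici_mem_nhds ht)
  have g0 : g 0 = 1 := h₁'0
  -- Step A : h₁ positive just right of 0
  have hA : ∃ ε > (0:ℝ), ∀ s ∈ Ioc (0:ℝ) ε, 0 < h₁ s := by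
    have hd0 : HasDerivWithinAt h₁ 1 (Ici 0) 0 := g0 ▸ hd₁ 0 self_mem_Ici
    have hslope := hasDerivWithinAt_iff_tendsto_slope.mp hd0
    rw [Ici_sdiff_left] at hslope
    have hev : ∀ᶠ s in 𝓝[>] (0:ℝ), 0 < slope h₁ 0 s :=
      hslope.eventually (eventually_gt_nhds one_pos)
    have hev2 : ∀ᶠ s in 𝓝[>] (0:ℝ), 0 < h₁ s := by
      filter_upwards [hev, self_mem_nhdsWithin] with s hs hs'
      rw [slope_def_field] at hs
      have : 0 < (h₁ s - h₁ 0) / (s - 0) := hs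
      rw [h₁0, sub_zero, sub_zero] at this
      have hspos : (0:ℝ) < s := hs'
      have h3 : 0 < (h₁ s / s) * s := mul_pos this hspos
      rwa [div_mul_cancel₀ _ (ne_of_gt hspos)] at h3
    obtain ⟨u, hu, hsub⟩ := mem_nhdsGT_iff_exists_Ioc_subset.mp hev2
    exact ⟨u, hu, fun s hs => hsub hs⟩
  -- Step B : positivity of h₁ on Ioi 0
  have hpos : ∀ t : ℝ, 0 < t → 0 < h₁ t := by
    by_contra hcon
    push_neg at hcon
    obtain ⟨t₀, ht₀, ht₀le⟩ := hcon
    obtain ⟨ε, hε, hεpos⟩ := hA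
    have hεt₀ : ε < t₀ := by
      by_contra h
      push_neg at h
      exact absurd ht₀le (not_le.2 (hεpos t₀ ⟨ht₀, h⟩))
    set Z : Set ℝ := {t | ε ≤ t ∧ h₁ t ≤ 0} with hZdef
    have hZc : IsClosed Z := by
      have hZeq : Z = Ici ε ∩ h₁ ⁻¹' (Iic 0) := by
        ext t; simp [hZdef]
      rw [hZeq]
      exact (h₁c.mono (Ici_subset_Ici.2 hε.le)).preimage_isClosed_of_isClosed
        isClosed_Ici isClosed_Iic
    have hZne : Z.Nonempty := ⟨t₀, hεt₀.le, ht₀le⟩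
    have hZbd : BddBelow Z := ⟨ε, fun x hx => hx.1⟩
    set τ := sInf Z with hτdef
    have hτZ : τ ∈ Z := hZc.csInf_mem hZne hZbd
    have hτε : ε ≤ τ := hτZ.1
    have hτpos : 0 < τ := lt_of_lt_of_le hε hτε
    have hIco : ∀ s ∈ Ico (0:ℝ) τ, 0 ≤ h₁ s := by
      rintro s ⟨hs0, hsτ⟩
      rcases eq_or_lt_of_le hs0 with h | h
      · simp [← h, h₁0]
      rcases le_or_gt s ε with h2 | h2
      · exact (hεpos s ⟨h, h2⟩).le
      · by_contra h3
        push_neg at h3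
        exact absurd (csInf_le hZbd ⟨h2.le, h3.le⟩) (not_le.2 hsτ)
    have gmono : MonotoneOn g (Icc 0 τ) := by
      apply monotoneOn_of_hasDerivWithinAt_nonneg (convex_Icc 0 τ)
        (hgc.mono (Icc_subset_Ici_self)) (f' := fun x => G x * h₁ x)
      · intro x hx
        rw [interior_Icc] at hx
        exact (hdg' x hx.1).hasDerivWithinAt
      · intro x hx
        rw [interior_Icc] at hx
        exact mul_nonneg (hGnn x hx.1.le) (hIco x ⟨hx.1.le, hx.2⟩)
    have g1 : ∀ s ∈ Icc (0:ℝ) τ, 1 ≤ g s := by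
      intro s hs
      have := gmono (left_mem_Icc.2 hτpos.le) hs hs.1
      rwa [g0] at this
    have h₁mono : StrictMonoOn h₁ (Icc 0 τ) := by
      apply strictMonoOn_of_hasDerivWithinAt_pos (convex_Icc 0 τ)
        (h₁c.mono Icc_subset_Ici_self) (f' := g)
      · intro x hx
        rw [interior_Icc] at hx
        exact (hd₁' x hx.1).hasDerivWithinAt
      · intro x hx
        rw [interior_Icc] at hx
        exact lt_of_lt_of_le one_pos (g1 x ⟨hx.1.le, hx.2.le⟩)
    have hεhalf : (0:ℝ) < ε / 2 := half_pos hε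
    have hmem : ε / 2 ∈ Icc (0:ℝ) τ := ⟨hεhalf.le, by linarith⟩
    have := h₁mono hmem (right_mem_Icc.2 hτpos.le) (by linarith)
    have hhalf := hεpos (ε/2) ⟨hεhalf, by linarith⟩
    have := hτZ.2
    linarith
  have hnn : ∀ t : ℝ, 0 ≤ t → 0 ≤ h₁ t := by
    intro t ht
    rcases eq_or_lt_of_le ht with h | h
    · simp [← h, h₁0]
    · exact (hpos t h).le
  -- Step C : g ≥ 1 on Ici 0
  have gmono : MonotoneOn g (Ici 0) := by
    apply monotoneOn_of_hasDerivWithinAt_nonneg (convex_Ici 0) hgc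
      (f' := fun x => G x * h₁ x)
    · intro x hx
      rw [interior_Ici] at hx
      exact (hdg' x hx).hasDerivWithinAt
    · intro x hx
      rw [interior_Ici] at hx
      exact mul_nonneg (hGnn x (mem_Ici.2 (le_of_lt hx))) (hnn x hx.le)
  have g1 : ∀ t : ℝ, 0 ≤ t → 1 ≤ g t := by
    intro t ht
    have := gmono self_mem_Ici ht ht
    rwa [g0] at this
  -- Step D : h₁ t ≤ t * g t
  have hφ : ∀ t : ℝ, 0 ≤ t → h₁ t ≤ t * g t := by
    have mono : MonotoneOn (fun t => t * g t - h₁ t) (Ici 0) := by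
      apply monotoneOn_of_hasDerivWithinAt_nonneg (convex_Ici 0)
        ((continuousOn_id.mul hgc).sub h₁c)
        (f' := fun x => 1 * g x + x * (G x * h₁ x) - g x)
      · intro x hx
        rw [interior_Ici] at hx
        exact (((hasDerivAt_id x).mul (hdg' x hx)).sub (hd₁' x hx)).hasDerivWithinAt
      · intro x hx
        rw [interior_Ici] at hx
        have := mul_nonneg hx.le (mul_nonneg (hGnn x (mem_Ici.2 (le_of_lt hx))) (hnn x hx.le))
        linarith
    intro t ht
    have := mono self_mem_Ici ht ht
    simp [h₁0] at this
    linarith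
  -- Step E : FTC facts for I
  have hf₀c : ContinuousOn f₀ (Ici 0) := continuousOn_id.mul hG
  have hf₀int : ∀ s : ℝ, 0 ≤ s → IntervalIntegrable f₀ volume 0 s := by
    intro s hs
    apply ContinuousOn.intervalIntegrable
    rw [uIcc_of_le hs]
    exact hf₀c.mono Icc_subset_Ici_self
  have hdI : ∀ t : ℝ, 0 < t → HasDerivAt I (f₀ t) t := by
    intro t ht
    exact integral_hasDerivAt_right (hf₀int t ht.le)
      (ContinuousOn.stronglyMeasurableAtFilter isOpen_Ioi
        (hf₀c.mono Ioi_subset_Ici_self) t ht)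
      (hf₀c.continuousAt (Ici_mem_nhds ht))
  have hIc : ContinuousOn I (Ici 0) := primCont hf₀c
  have hI0 : I 0 = 0 := integral_same
  -- Step F : g t ≤ exp (I t)
  have hgE : ∀ t : ℝ, 0 ≤ t → g t ≤ Real.exp (I t) := by
    have anti : AntitoneOn (fun t => g t * Real.exp (-(I t))) (Ici 0) := by
      apply antitoneOn_of_hasDerivWithinAt_nonpos (convex_Ici 0)
        (hgc.mul (Real.continuous_exp.comp_continuousOn hIc.neg))
        (f' := fun x => G x * h₁ x * Real.exp (-(I x)) +
          g x * (Real.exp (-(I x)) * -(f₀ x)))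
      · intro x hx
        rw [interior_Ici] at hx
        exact ((hdg' x hx).mul ((hdI x hx).neg.exp)).hasDerivWithinAt
      · intro x hx
        rw [interior_Ici] at hx
        have hE : (0:ℝ) < Real.exp (-(I x)) := Real.exp_pos _
        have h1 : 0 ≤ G x * (x * g x - h₁ x) :=
          mul_nonneg (hGnn x (mem_Ici.2 (le_of_lt hx))) (sub_nonneg.2 (hφ x hx.le))
        have key : G x * h₁ x * Real.exp (-(I x)) +
            g x * (Real.exp (-(I x)) * -(f₀ x)) =
            -(Real.exp (-(I x)) * (G x * (x * g x - h₁ x))) := by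
          simp only [hf₀def]; ring
        rw [key]
        exact neg_nonpos.2 (mul_nonneg hE.le h1)
    intro t ht
    have h2 := anti self_mem_Ici ht ht
    simp [g0, hI0] at h2
    calc g t = g t * Real.exp (-(I t)) * Real.exp (I t) := by
          rw [mul_assoc, ← Real.exp_add]; simp
      _ ≤ 1 * Real.exp (I t) :=
          mul_le_mul_of_nonneg_right h2 (Real.exp_pos _).le
      _ = Real.exp (I t) := one_mul _
  -- Step G : h₁ t ≤ ∫₀^t exp (I s) ds
  set E : ℝ → ℝ := fun s => Real.exp (I s) with hEdef
  have hEc : ContinuousOn E (Ici 0) := Real.continuous_exp.comp_continuousOn hIc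
  have hEint : ∀ t : ℝ, 0 ≤ t → IntervalIntegrable E volume 0 t := by
    intro t ht
    apply ContinuousOn.intervalIntegrable
    rw [uIcc_of_le ht]
    exact hEc.mono Icc_subset_Ici_self
  have hdJ : ∀ t : ℝ, 0 < t → HasDerivAt (fun u => ∫ s in (0:ℝ)..u, E s) (E t) t := by
    intro t ht
    exact integral_hasDerivAt_right (hEint t ht.le)
      (ContinuousOn.stronglyMeasurableAtFilter isOpen_Ioi
        (hEc.mono Ioi_subset_Ici_self) t ht)
      (hEc.continuousAt (Ici_mem_nhds ht))
  have hfirst : ∀ t : ℝ, 0 ≤ t → h₁ t ≤ ∫ s in (0:ℝ)..t, E s := by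
    have mono : MonotoneOn (fun t => (∫ s in (0:ℝ)..t, E s) - h₁ t) (Ici 0) := by
      apply monotoneOn_of_hasDerivWithinAt_nonneg (convex_Ici 0)
        ((primCont hEc).sub h₁c) (f' := fun x => E x - g x)
      · intro x hx
        rw [interior_Ici] at hx
        exact ((hdJ x hx).sub (hd₁' x hx)).hasDerivWithinAt
      · intro x hx
        rw [interior_Ici] at hx
        exact sub_nonneg.2 (hgE x hx.le)
    intro t ht
    have := mono self_mem_Ici ht ht
    simp [h₁0] at this
    linarith
  -- Step H : second inequality
  intro t ht
  have htpos : (0:ℝ) < t := ht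
  refine ⟨hfirst t htpos.le, ?_⟩
  have hf₀nn : ∀ᵐ x ∂(volume.restrict (Ioi (0:ℝ))), 0 ≤ f₀ x := by
    refine (ae_restrict_iff' measurableSet_Ioi).2 (ae_of_all _ ?_)
    intro x hx
    exact mul_nonneg (le_of_lt hx) (hGnn x (mem_Ici.2 (le_of_lt hx)))
  have hbound : ∀ s : ℝ, 0 ≤ s → I s ≤ ∫ τ in Ioi (0:ℝ), f₀ τ := by
    intro s hs
    have h1 : I s = ∫ τ in Ioc (0:ℝ) s, f₀ τ := integral_of_le hs
    rw [h1]
    exact setIntegral_mono_set hint hf₀nn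
      (HasSubset.Subset.eventuallyLE Ioc_subset_Ioi_self)
  have hconst : ∀ s ∈ Icc (0:ℝ) t, E s ≤ Real.exp (∫ τ in Ioi (0:ℝ), f₀ τ) := by
    intro s hs
    exact Real.exp_le_exp.2 (hbound s hs.1)
  calc (∫ s in (0:ℝ)..t, E s)
      ≤ ∫ s in (0:ℝ)..t, Real.exp (∫ τ in Ioi (0:ℝ), f₀ τ) := by
        apply integral_mono_on htpos.le (hEint t htpos.le)
          intervalIntegrable_const hconst
    _ = t * Real.exp (∫ τ in Ioi (0:ℝ), f₀ τ) := by
        rw [intervalIntegral.integral_const, smul_eq_mul, sub_zero]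
end

section
/- For all t ≥ 0 one has t ≤ h(t) ≤ e^{b₀}·t; moreover h' is nondecreasing on [0,∞) and satisfies 1 ≤ h'(t) ≤ 1 + b₀·e^{b₀} for all t ≥ 0. -/
open Set Filter MeasureTheory
open Topology

/-- `t ≤ h(t) ≤ e^{b₀} t`; `h'` is nondecreasing with `1 ≤ h' ≤ 1 + b₀ e^{b₀}`,
where `b₀ = ∫₀^∞ s λ(s) ds`. -/
theorem stmt_10 (lam h : ℝ → ℝ)
    (hlamc : ContinuousOn lam (Ici 0)) (hlamnn : ∀ t ∈ Ici (0 : ℝ), 0 ≤ lam t)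
    (hlamanti : AntitoneOn lam (Ici 0))
    (hb₀ : IntegrableOn (fun s => s * lam s) (Ioi 0))
    (hh : ContDiffOn ℝ 2 h (Ici 0))
    (ode : ∀ t ∈ Ici (0 : ℝ),
      derivWithin (derivWithin h (Ici 0)) (Ici 0) t = lam t * h t)
    (h0 : h 0 = 0) (h'0 : derivWithin h (Ici 0) 0 = 1)
    :
    (∀ t ∈ Ici (0 : ℝ),
      t ≤ h t ∧ h t ≤ Real.exp (∫ s in Ioi (0 : ℝ), s * lam s) * t) ∧
    MonotoneOn (derivWithin h (Ici 0)) (Ici 0) ∧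
    (∀ t ∈ Ici (0 : ℝ),
      1 ≤ derivWithin h (Ici 0) t ∧
      derivWithin h (Ici 0) t ≤
        1 + (∫ s in Ioi (0 : ℝ), s * lam s) *
          Real.exp (∫ s in Ioi (0 : ℝ), s * lam s)) := by
  have U : UniqueDiffOn ℝ (Ici (0:ℝ)) := uniqueDiffOn_Ici 0
  set g := derivWithin h (Ici (0:ℝ)) with hgdef
  have hcont : ContinuousOn h (Ici 0) := hh.continuousOn
  have hgC1 : ContDiffOn ℝ 1 g (Ici 0) := hh.derivWithin U (by norm_num)
  have hgcont : ContinuousOn g (Ici 0) := hgC1.continuousOn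
  have hgdiff : DifferentiableOn ℝ g (Ici 0) := hgC1.differentiableOn one_ne_zero
  have hhd : ∀ t ∈ Ici (0:ℝ), HasDerivWithinAt h (g t) (Ici 0) t := fun t ht =>
    ((hh.differentiableOn (by norm_num)) t ht).hasDerivWithinAt
  have hgd : ∀ t ∈ Ici (0:ℝ), HasDerivWithinAt g (lam t * h t) (Ici 0) t := fun t ht => by
    have := (hgdiff t ht).hasDerivWithinAt
    rwa [ode t ht] at this
  have hhd' : ∀ t : ℝ, 0 < t → HasDerivAt h (g t) t := fun t ht =>
    (hhd t ht.le).hasDerivAt (Ici_mem_nhds ht)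
  have hgd' : ∀ t : ℝ, 0 < t → HasDerivAt g (lam t * h t) t := fun t ht =>
    (hgd t ht.le).hasDerivAt (Ici_mem_nhds ht)
  -- positivity of h near 0
  have hpos0 : ∀ᶠ t in 𝓝[>] (0:ℝ), 0 < h t := by
    have H : HasDerivWithinAt h 1 (Ioi 0) 0 := by
      have := hhd 0 (self_mem_Ici); rw [h'0] at this; exact this.mono Ioi_subset_Ici_self
    have hs := hasDerivWithinAt_iff_tendsto_slope.mp H
    have hslope : ∀ᶠ t in 𝓝[Ioi 0 \ {0}] (0:ℝ), 0 < slope h 0 t :=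
      hs.eventually (eventually_gt_nhds one_pos)
    have hE : (Ioi (0:ℝ)) \ {0} = Ioi 0 := by
      apply diff_singleton_eq_self; simp
    rw [hE] at hslope
    filter_upwards [hslope, self_mem_nhdsWithin] with t hst ht
    have hts : slope h 0 t = h t / t := by
      simp [slope_def_field, h0]
    rw [hts] at hst
    exact (div_pos_iff.mp hst).resolve_right (fun ⟨_, h2⟩ => absurd ht (by simp; linarith)) |>.1
  -- h is nonnegative on [0, ∞)
  have hnn : ∀ t ∈ Ici (0:ℝ), 0 ≤ h t := by
    by_contra hcon
    push_neg at hcon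
    obtain ⟨t₀, ht₀, ht₀neg⟩ := hcon
    set A := {t : ℝ | 0 ≤ t ∧ h t < 0} with hA
    have hAne : A.Nonempty := ⟨t₀, ht₀, ht₀neg⟩
    have hAbdd : BddBelow A := ⟨0, fun x hx => hx.1⟩
    set T := sInf A with hTdef
    have hTmem : T ∈ closure A := csInf_mem_closure hAne hAbdd
    have hTnn : 0 ≤ T := le_csInf hAne (fun x hx => hx.1)
    have hCsub : A ⊆ {t : ℝ | 0 ≤ t ∧ h t ≤ 0} := fun x hx => ⟨hx.1, hx.2.le⟩
    have hCclosed : IsClosed {t : ℝ | 0 ≤ t ∧ h t ≤ 0} := by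
      have : {t : ℝ | 0 ≤ t ∧ h t ≤ 0} = Ici 0 ∩ h ⁻¹' (Iic 0) := by
        ext x; simp [mem_Ici, mem_Iic, and_comm]
      rw [this]
      exact ContinuousOn.preimage_isClosed_of_isClosed hcont isClosed_Ici isClosed_Iic
    have hTle : h T ≤ 0 :=
      ((hCclosed.closure_subset_iff.mpr hCsub) hTmem).2
    rcases eq_or_lt_of_le hTnn with hT0 | hTpos
    · -- T = 0 : contradiction with positivity near 0
      have hAsub : A ⊆ Ioi (0:ℝ) := by
        intro x hx
        rcases eq_or_lt_of_le hx.1 with hx0 | hx0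
        · exfalso; have h2 := hx.2; rw [← hx0, h0] at h2; exact lt_irrefl 0 h2
        · exact hx0
      have hne : (𝓝[A] (0:ℝ)).NeBot := by
        rw [← hT0] at hTmem
        exact mem_closure_iff_nhdsWithin_neBot.mp hTmem
      have h1 : ∀ᶠ t in 𝓝[A] (0:ℝ), 0 < h t :=
        hpos0.filter_mono (nhdsWithin_mono 0 hAsub)
      have h2 : ∀ᶠ t in 𝓝[A] (0:ℝ), h t < 0 := by
        filter_upwards [self_mem_nhdsWithin] with t ht
        exact ht.2
      obtain ⟨t, ht1, ht2⟩ := (h1.and h2).exists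
      linarith
    · -- T > 0
      have hIoo : ∀ t ∈ Ioo (0:ℝ) T, 0 ≤ h t := by
        intro t ht
        by_contra hneg
        push_neg at hneg
        exact absurd (csInf_le hAbdd ⟨ht.1.le, hneg⟩) (not_le.mpr ht.2)
      have hgmono : MonotoneOn g (Icc 0 T) := by
        apply monotoneOn_of_deriv_nonneg (convex_Icc 0 T) (hgcont.mono Icc_subset_Ici_self)
        · rw [interior_Icc]
          exact fun x hx => ((hgd' x hx.1).differentiableAt).differentiableWithinAt
        · rw [interior_Icc]
          intro x hx
          rw [(hgd' x hx.1).deriv]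
          exact mul_nonneg (hlamnn x hx.1.le) (hIoo x hx)
      have hg1 : ∀ t ∈ Icc (0:ℝ) T, 1 ≤ g t := by
        intro t ht
        have := hgmono (left_mem_Icc.mpr hTnn) ht ht.1
        rwa [h'0] at this
      have hmono : StrictMonoOn h (Icc 0 T) := by
        apply strictMonoOn_of_deriv_pos (convex_Icc 0 T) (hcont.mono Icc_subset_Ici_self)
        rw [interior_Icc]
        intro x hx
        rw [(hhd' x hx.1).deriv]
        exact lt_of_lt_of_le one_pos (hg1 x ⟨hx.1.le, hx.2.le⟩)
      have := hmono (left_mem_Icc.mpr hTnn) (right_mem_Icc.mpr hTnn) hTpos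
      rw [h0] at this
      linarith
  -- g is monotone on [0, ∞)
  have hgmono : MonotoneOn g (Ici 0) := by
    apply monotoneOn_of_deriv_nonneg (convex_Ici 0) hgcont
    · rw [interior_Ici]
      exact fun x hx => ((hgd' x hx).differentiableAt).differentiableWithinAt
    · rw [interior_Ici]
      intro x hx
      rw [(hgd' x hx).deriv]
      exact mul_nonneg (hlamnn x (mem_Ici.mpr hx.le)) (hnn x (mem_Ici.mpr hx.le))
  have hg1 : ∀ t ∈ Ici (0:ℝ), 1 ≤ g t := by
    intro t ht
    have := hgmono self_mem_Ici ht ht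
    rwa [h'0] at this
  -- t ≤ h t
  have hlow : ∀ t ∈ Ici (0:ℝ), t ≤ h t := by
    have hmono : MonotoneOn (fun t => h t - t) (Ici 0) := by
      apply monotoneOn_of_deriv_nonneg (convex_Ici 0) (hcont.sub continuousOn_id)
      · rw [interior_Ici]
        exact fun x hx =>
          (((hhd' x hx).sub (hasDerivAt_id x)).differentiableAt).differentiableWithinAt
      · rw [interior_Ici]
        intro x hx
        rw [((hhd' x hx).sub (hasDerivAt_id x)).deriv]
        have := hg1 x (mem_Ici.mpr hx.le)
        linarith
    intro t ht
    have := hmono self_mem_Ici ht ht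
    simp only [h0, sub_zero, zero_sub] at this
    linarith
  -- h t ≤ t * g t
  have hup1 : ∀ t ∈ Ici (0:ℝ), h t ≤ t * g t := by
    have hmono : MonotoneOn (fun t => t * g t - h t) (Ici 0) := by
      apply monotoneOn_of_deriv_nonneg (convex_Ici 0) ((continuousOn_id.mul hgcont).sub hcont)
      · rw [interior_Ici]
        intro x hx
        exact ((((hasDerivAt_id x).mul (hgd' x hx)).sub
          (hhd' x hx)).differentiableAt).differentiableWithinAt
      · rw [interior_Ici]
        intro x hx
        rw [(((hasDerivAt_id x).mul (hgd' x hx)).sub (hhd' x hx)).deriv]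
        have h1 := mul_nonneg (hlamnn x (mem_Ici.mpr hx.le)) (hnn x (mem_Ici.mpr hx.le))
        have h2 := mul_nonneg hx.le h1
        simp only [id_eq, one_mul]
        linarith
    intro t ht
    have := hmono self_mem_Ici ht ht
    simp only [h0, zero_mul, sub_zero, zero_sub] at this
    linarith
  -- the primitive ψ of s λ(s)
  set b₀ := ∫ s in Ioi (0 : ℝ), s * lam s with hb0def
  set ψ := fun t : ℝ => ∫ s in (0:ℝ)..t, s * lam s with hψdef
  have hflamc : ContinuousOn (fun s : ℝ => s * lam s) (Ici 0) := continuousOn_id.mul hlamc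
  have hii : ∀ t : ℝ, 0 ≤ t → IntervalIntegrable (fun s : ℝ => s * lam s) volume 0 t := by
    intro t ht
    apply ContinuousOn.intervalIntegrable
    rw [uIcc_of_le ht]
    exact hflamc.mono Icc_subset_Ici_self
  have hψd : ∀ t : ℝ, 0 < t → HasDerivAt ψ (t * lam t) t := by
    intro t ht
    exact intervalIntegral.integral_hasDerivAt_right (hii t ht.le)
      ((ContinuousOn.stronglyMeasurableAtFilter isOpen_Ioi (hflamc.mono Ioi_subset_Ici_self)) t ht)
      (hflamc.continuousAt (Ici_mem_nhds ht))
  have hψ0 : HasDerivWithinAt ψ ((0:ℝ) * lam 0) (Ici 0) 0 :=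
    intervalIntegral.integral_hasDerivWithinAt_right (t := Ioi 0) (hii 0 le_rfl)
      ((hflamc.mono Ioi_subset_Ici_self).stronglyMeasurableAtFilter_nhdsWithin measurableSet_Ioi 0)
      ((hflamc 0 self_mem_Ici).mono Ioi_subset_Ici_self)
  have hψcont : ContinuousOn ψ (Ici 0) := by
    intro t ht
    rcases eq_or_lt_of_le (mem_Ici.mp ht) with h1 | h1
    · exact h1 ▸ hψ0.continuousWithinAt
    · exact ((hψd t h1).continuousAt).continuousWithinAt
  have hψle : ∀ t : ℝ, 0 ≤ t → ψ t ≤ b₀ := by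
    intro t ht
    rw [hψdef]
    simp only
    rw [intervalIntegral.integral_of_le ht, hb0def]
    apply setIntegral_mono_set hb₀
    · refine (ae_restrict_iff' measurableSet_Ioi).mpr (ae_of_all _ fun s hs => ?_)
      exact mul_nonneg (le_of_lt hs) (hlamnn s (mem_Ici.mpr (le_of_lt hs)))
    · exact HasSubset.Subset.eventuallyLE Ioc_subset_Ioi_self
  -- g t ≤ exp (ψ t)
  have hgexp : ∀ t ∈ Ici (0:ℝ), g t ≤ Real.exp (ψ t) := by
    have hmono : AntitoneOn (fun t => Real.exp (-ψ t) * g t) (Ici 0) := by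
      apply antitoneOn_of_deriv_nonpos (convex_Ici 0)
        (hψcont.neg.rexp.mul hgcont)
      · rw [interior_Ici]
        intro x hx
        exact (((((hψd x hx).neg).exp).mul (hgd' x hx)).differentiableAt).differentiableWithinAt
      · rw [interior_Ici]
        intro x hx
        rw [((((hψd x hx).neg).exp).mul (hgd' x hx)).deriv]
        have hle := hup1 x (mem_Ici.mpr hx.le)
        have hlam := hlamnn x (mem_Ici.mpr hx.le)
        have hexp : (0:ℝ) < Real.exp ((-ψ) x) := Real.exp_pos _
        nlinarith [mul_nonneg hexp.le (mul_nonneg hlam (sub_nonneg.mpr hle))]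
    intro t ht
    have hF := hmono self_mem_Ici ht ht
    have hψ00 : ψ 0 = 0 := intervalIntegral.integral_same
    simp only [hψ00, h'0, neg_zero, Real.exp_zero, one_mul, mul_one] at hF
    calc g t = Real.exp (ψ t) * (Real.exp (-ψ t) * g t) := by
          rw [← mul_assoc, ← Real.exp_add]; simp
      _ ≤ Real.exp (ψ t) * 1 := mul_le_mul_of_nonneg_left hF (Real.exp_pos _).le
      _ = Real.exp (ψ t) := mul_one _
  have geb : ∀ t ∈ Ici (0:ℝ), g t ≤ Real.exp b₀ := fun t ht =>
    (hgexp t ht).trans (Real.exp_le_exp.mpr (hψle t ht))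
  have hub : ∀ t ∈ Ici (0:ℝ), h t ≤ Real.exp b₀ * t := by
    intro t ht
    calc h t ≤ t * g t := hup1 t ht
      _ ≤ t * Real.exp b₀ := mul_le_mul_of_nonneg_left (geb t ht) ht
      _ = Real.exp b₀ * t := mul_comm _ _
  -- final bound on g
  have hgb : ∀ t ∈ Ici (0:ℝ), g t ≤ 1 + b₀ * Real.exp b₀ := by
    have hmono : AntitoneOn (fun t => g t - Real.exp b₀ * ψ t) (Ici 0) := by
      apply antitoneOn_of_deriv_nonpos (convex_Ici 0)
        (hgcont.sub (continuousOn_const.mul hψcont))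
      · rw [interior_Ici]
        intro x hx
        exact (((hgd' x hx).sub
          ((hψd x hx).const_mul (Real.exp b₀))).differentiableAt).differentiableWithinAt
      · rw [interior_Ici]
        intro x hx
        change deriv (g - fun y => Real.exp b₀ * ψ y) x ≤ 0
        rw [((hgd' x hx).sub ((hψd x hx).const_mul (Real.exp b₀))).deriv]
        have h1 := hub x (mem_Ici.mpr hx.le)
        have hlam := hlamnn x (mem_Ici.mpr hx.le)
        nlinarith [mul_nonneg hlam (sub_nonneg.mpr h1)]
    intro t ht
    have hF := hmono self_mem_Ici ht ht
    have hψ00 : ψ 0 = 0 := intervalIntegral.integral_same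
    simp only [hψ00, h'0, mul_zero, sub_zero] at hF
    have h2 := hψle t ht
    nlinarith [Real.exp_pos b₀]
  refine ⟨fun t ht => ⟨hlow t ht, hub t ht⟩, hgmono, fun t ht => ⟨hg1 t ht, hgb t ht⟩⟩
end

section
/- The limit lim_{t→∞} h'(t) exists, is finite, and equals 1 + ∫₀^∞ λ(s)·h(s) ds; moreover this limit is at least 1 + b₀. -/
open Set Filter MeasureTheory

/-- FTC on `[a,b] ⊆ [0,∞)` for a function with a continuous one-sided derivative. -/
lemma stmt_11_ftc (f f' : ℝ → ℝ)
    (hd : ∀ t ∈ Ici (0:ℝ), HasDerivWithinAt f (f' t) (Ici 0) t)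
    (hc : ContinuousOn f' (Ici 0)) {a b : ℝ} (ha : 0 ≤ a) (hab : a ≤ b) :
    ∫ u in a..b, f' u = f b - f a := by
  have hIcc : Icc a b ⊆ Ici (0:ℝ) := fun x hx => ha.trans hx.1
  apply intervalIntegral.integral_eq_sub_of_hasDeriv_right_of_le hab
  · exact fun x hx => ((hd x (hIcc hx)).continuousWithinAt).mono hIcc
  · intro x hx
    exact (hd x (hIcc (Ioo_subset_Icc_self hx))).mono
      (fun y hy => ((ha.trans hx.1.le).trans hy.le))
  · exact (hc.mono hIcc).intervalIntegrable_of_Icc hab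

/-- `lim_{t→∞} h'(t)` exists, is finite, equals `1 + ∫₀^∞ λ(s) h(s) ds`, and is
at least `1 + b₀` where `b₀ = ∫₀^∞ s λ(s) ds`. -/
theorem stmt_11 (lam h : ℝ → ℝ)
    (hlamc : ContinuousOn lam (Ici 0)) (hlamnn : ∀ t ∈ Ici (0 : ℝ), 0 ≤ lam t)
    (hlamanti : AntitoneOn lam (Ici 0))
    (hb₀ : IntegrableOn (fun s => s * lam s) (Ioi 0))
    (hh : ContDiffOn ℝ 2 h (Ici 0))
    (ode : ∀ t ∈ Ici (0 : ℝ),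
      derivWithin (derivWithin h (Ici 0)) (Ici 0) t = lam t * h t)
    (h0 : h 0 = 0) (h'0 : derivWithin h (Ici 0) 0 = 1)
    :
    IntegrableOn (fun s => lam s * h s) (Ioi 0) ∧
    Tendsto (derivWithin h (Ici 0)) atTop
      (nhds (1 + ∫ s in Ioi (0 : ℝ), lam s * h s)) ∧
    1 + (∫ s in Ioi (0 : ℝ), s * lam s) ≤ 1 + ∫ s in Ioi (0 : ℝ), lam s * h s := by
  set g := derivWithin h (Ici 0) with hg_def
  have huniq : UniqueDiffOn ℝ (Ici (0:ℝ)) := uniqueDiffOn_Ici 0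
  have hh_cont : ContinuousOn h (Ici 0) := hh.continuousOn
  have hg_cont : ContinuousOn g (Ici 0) :=
    hh.continuousOn_derivWithin huniq (by norm_num)
  have hg_cd : ContDiffOn ℝ 1 g (Ici 0) := hh.derivWithin huniq (by norm_num)
  have hh_deriv : ∀ t ∈ Ici (0:ℝ), HasDerivWithinAt h (g t) (Ici 0) t := fun t ht =>
    ((hh.differentiableOn (by norm_num)) t ht).hasDerivWithinAt
  have hg_deriv : ∀ t ∈ Ici (0:ℝ), HasDerivWithinAt g (lam t * h t) (Ici 0) t := by
    intro t ht
    have hd := ((hg_cd.differentiableOn (by norm_num)) t ht).hasDerivWithinAt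
    rwa [ode t ht] at hd
  have hg0 : g 0 = 1 := h'0
  have hfh_cont : ContinuousOn (fun s => lam s * h s) (Ici 0) := hlamc.mul hh_cont
  have ftc_h : ∀ a b : ℝ, 0 ≤ a → a ≤ b → ∫ u in a..b, g u = h b - h a :=
    fun a b ha hab => stmt_11_ftc h g hh_deriv hg_cont ha hab
  have ftc_g : ∀ a b : ℝ, 0 ≤ a → a ≤ b → ∫ u in a..b, lam u * h u = g b - g a :=
    fun a b ha hab => stmt_11_ftc g (fun u => lam u * h u) hg_deriv hfh_cont ha hab
  -- Step 1: g ≥ 1 on [0, ∞)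
  have hgone : ∀ t, 0 ≤ t → 1 ≤ g t := by
    by_contra hcon
    push_neg at hcon
    obtain ⟨t₁, ht₁0, ht₁⟩ := hcon
    set E := {t : ℝ | 0 ≤ t ∧ g t < 1} with hE_def
    have hEne : E.Nonempty := ⟨t₁, ht₁0, ht₁⟩
    have hEbdd : BddBelow E := ⟨0, fun x hx => hx.1⟩
    set t₀ := sInf E with ht₀_def
    have ht₀0 : 0 ≤ t₀ := le_csInf hEne (fun x hx => hx.1)
    have hlt : ∀ s, 0 ≤ s → s < t₀ → 1 ≤ g s := by
      intro s hs hst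
      by_contra hgs; push_neg at hgs
      exact absurd (csInf_le hEbdd ⟨hs, hgs⟩) (not_le.mpr hst)
    have hgt₀ : 1 ≤ g t₀ := by
      rcases eq_or_lt_of_le ht₀0 with heq | hpos
      · rw [← heq, hg0]
      · by_contra hglt; push_neg at hglt
        have hcw : ContinuousWithinAt g (Ici 0) t₀ := hg_cont t₀ ht₀0
        have hev : {s | g s < 1} ∈ nhdsWithin t₀ (Ici 0) := hcw (Iio_mem_nhds hglt)
        rw [Metric.mem_nhdsWithin_iff] at hev
        obtain ⟨δ, hδpos, hδ⟩ := hev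
        set s := max 0 (t₀ - δ/2) with hs_def
        have hs0 : 0 ≤ s := le_max_left _ _
        have hst : s < t₀ := by
          apply max_lt hpos
          linarith
        have hdist : dist s t₀ < δ := by
          rw [Real.dist_eq, abs_of_nonpos (by linarith)]
          have : t₀ - δ/2 ≤ s := le_max_right _ _
          linarith
        exact absurd (hlt s hs0 hst)
          (not_le.mpr (hδ ⟨Metric.mem_ball.mpr hdist, hs0⟩))
    have hg_nn : ∀ s, 0 ≤ s → s ≤ t₀ → 0 ≤ g s := by
      intro s hs hst
      rcases lt_or_eq_of_le hst with hlt' | heq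
      · linarith [hlt s hs hlt']
      · rw [heq]; linarith
    have hht₀ : 0 ≤ h t₀ := by
      have hI := ftc_h 0 t₀ le_rfl ht₀0
      rw [h0, sub_zero] at hI
      rw [← hI]
      exact intervalIntegral.integral_nonneg ht₀0 (fun u hu => hg_nn u hu.1 hu.2)
    -- continuity: g > 0 near t₀
    have hcw : ContinuousWithinAt g (Ici 0) t₀ := hg_cont t₀ ht₀0
    have hev : {s | 0 < g s} ∈ nhdsWithin t₀ (Ici 0) :=
      hcw (Ioi_mem_nhds (by linarith))
    rw [Metric.mem_nhdsWithin_iff] at hev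
    obtain ⟨δ, hδpos, hδ⟩ := hev
    have hpos_h : ∀ s, t₀ ≤ s → s < t₀ + δ → 0 ≤ h s := by
      intro s hs hs'
      have hI := ftc_h t₀ s ht₀0 hs
      have hint : 0 ≤ ∫ u in t₀..s, g u := by
        apply intervalIntegral.integral_nonneg hs
        intro u hu
        apply le_of_lt
        apply hδ ⟨Metric.mem_ball.mpr ?_, ht₀0.trans hu.1⟩
        rw [Real.dist_eq, abs_of_nonneg (by linarith [hu.1])]
        linarith [hu.2]
      linarith
    have hge1 : ∀ s, t₀ ≤ s → s < t₀ + δ → 1 ≤ g s := by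
      intro s hs hs'
      have hI := ftc_g t₀ s ht₀0 hs
      have hint : 0 ≤ ∫ u in t₀..s, lam u * h u := by
        apply intervalIntegral.integral_nonneg hs
        intro u hu
        exact mul_nonneg (hlamnn u (ht₀0.trans hu.1))
          (hpos_h u hu.1 (lt_of_le_of_lt hu.2 hs'))
      linarith
    obtain ⟨e, heE, helt⟩ := (csInf_lt_iff hEbdd hEne).mp
      (show sInf E < t₀ + δ by rw [← ht₀_def]; linarith)
    have het₀ : t₀ ≤ e := csInf_le hEbdd heE
    exact absurd (hge1 e het₀ helt) (not_le.mpr heE.2)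
  -- Step 2: basic consequences
  have hgpos : ∀ t, 0 ≤ t → 0 < g t := fun t ht => lt_of_lt_of_le one_pos (hgone t ht)
  have hg_int : ∀ t : ℝ, 0 ≤ t → IntervalIntegrable g volume 0 t := fun t ht =>
    (hg_cont.mono (by rw [uIcc_of_le ht]; exact fun x hx => hx.1)).intervalIntegrable
  have hh_ge : ∀ t, 0 ≤ t → t ≤ h t := by
    intro t ht
    have hI := ftc_h 0 t le_rfl ht
    rw [h0, sub_zero] at hI
    calc t = ∫ _ in (0:ℝ)..t, (1:ℝ) := by simp
      _ ≤ ∫ u in (0:ℝ)..t, g u := by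
          apply intervalIntegral.integral_mono_on ht intervalIntegrable_const
            (hg_int t ht)
          exact fun u hu => hgone u hu.1
      _ = h t := hI
  have hh_nonneg : ∀ t, 0 ≤ t → 0 ≤ h t := fun t ht => ht.trans (hh_ge t ht)
  have hg_mono : ∀ a b : ℝ, 0 ≤ a → a ≤ b → g a ≤ g b := by
    intro a b ha hab
    have hI := ftc_g a b ha hab
    have hint : 0 ≤ ∫ u in a..b, lam u * h u := by
      apply intervalIntegral.integral_nonneg hab
      intro u hu
      exact mul_nonneg (hlamnn u (ha.trans hu.1)) (hh_nonneg u (ha.trans hu.1))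
    linarith
  have hh_le : ∀ t, 0 ≤ t → h t ≤ t * g t := by
    intro t ht
    have hI := ftc_h 0 t le_rfl ht
    rw [h0, sub_zero] at hI
    calc h t = ∫ u in (0:ℝ)..t, g u := hI.symm
      _ ≤ ∫ _ in (0:ℝ)..t, g t := by
          apply intervalIntegral.integral_mono_on ht (hg_int t ht)
            intervalIntegrable_const
          exact fun u hu => hg_mono u t hu.1 hu.2
      _ = t * g t := by simp [mul_comm]
  -- Step 3: Gronwall-type bound g ≤ exp b₀
  set b₀ := ∫ s in Ioi (0:ℝ), s * lam s with hb₀_def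
  have hslam_nn : 0 ≤ᵐ[volume.restrict (Ioi (0:ℝ))] fun s => s * lam s := by
    filter_upwards [ae_restrict_mem measurableSet_Ioi] with s hs
    exact mul_nonneg (le_of_lt hs) (hlamnn s (mem_Ici.mpr (le_of_lt hs)))
  have hIoc_le : ∀ t : ℝ, 0 ≤ t → (∫ u in (0:ℝ)..t, u * lam u) ≤ b₀ := by
    intro t ht
    rw [intervalIntegral.integral_of_le ht]
    exact setIntegral_mono_set hb₀ hslam_nn Ioc_subset_Ioi_self.eventuallyLE
  have hlog_deriv : ∀ t ∈ Ici (0:ℝ),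
      HasDerivWithinAt (fun u => Real.log (g u)) (lam t * h t / g t) (Ici 0) t :=
    fun t ht => (hg_deriv t ht).log (ne_of_gt (hgpos t ht))
  have hlog_cont : ContinuousOn (fun u => lam u * h u / g u) (Ici 0) :=
    hfh_cont.div hg_cont (fun t ht => ne_of_gt (hgpos t ht))
  have hgle : ∀ t, 0 ≤ t → g t ≤ Real.exp b₀ := by
    intro t ht
    have hftc := stmt_11_ftc (fun u => Real.log (g u)) (fun u => lam u * h u / g u)
      hlog_deriv hlog_cont le_rfl ht
    rw [hg0, Real.log_one, sub_zero] at hftc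
    have hmono : (∫ u in (0:ℝ)..t, lam u * h u / g u) ≤ ∫ u in (0:ℝ)..t, u * lam u := by
      apply intervalIntegral.integral_mono_on ht
      · exact (hlog_cont.mono (by rw [uIcc_of_le ht]; exact fun x hx => hx.1)).intervalIntegrable
      · exact ((continuous_id.continuousOn.mul hlamc).mono
          (by rw [uIcc_of_le ht]; exact fun x hx => hx.1)).intervalIntegrable
      · intro u hu
        have hgu := hgpos u hu.1
        rw [div_le_iff₀ hgu]
        have h1 : h u ≤ u * g u := hh_le u hu.1
        have h2 : 0 ≤ lam u := hlamnn u hu.1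
        nlinarith
    have hlog : Real.log (g t) ≤ b₀ := by
      rw [← hftc] at *
      linarith [hIoc_le t ht]
    calc g t = Real.exp (Real.log (g t)) := (Real.exp_log (hgpos t ht)).symm
      _ ≤ Real.exp b₀ := Real.exp_le_exp.mpr hlog
  -- Step 4: integrability of λ h on (0, ∞)
  have key_int : IntegrableOn (fun s => lam s * h s) (Ioi 0) := by
    apply integrableOn_Ioi_of_intervalIntegral_norm_bounded (Real.exp b₀ - 1) 0
      (b := fun n : ℕ => (n : ℝ)) (l := atTop)
    · intro n
      have : ContinuousOn (fun s => lam s * h s) (Icc 0 (n:ℝ)) :=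
        hfh_cont.mono (fun x hx => hx.1)
      exact this.integrableOn_Icc.mono_set Ioc_subset_Icc_self
    · exact tendsto_natCast_atTop_atTop
    · filter_upwards with n
      have hn : (0:ℝ) ≤ n := Nat.cast_nonneg n
      have heq : (∫ x in (0:ℝ)..(n:ℝ), ‖lam x * h x‖) = ∫ x in (0:ℝ)..(n:ℝ), lam x * h x := by
        apply intervalIntegral.integral_congr
        intro x hx
        rw [uIcc_of_le hn] at hx
        exact Real.norm_of_nonneg (mul_nonneg (hlamnn x hx.1) (hh_nonneg x hx.1))
      rw [heq, ftc_g 0 n le_rfl hn, hg0]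
      linarith [hgle n hn]
  refine ⟨key_int, ?_, ?_⟩
  · -- the limit
    have hlim0 : Tendsto (fun t => ∫ s in (0:ℝ)..t, lam s * h s) atTop
        (nhds (∫ s in Ioi (0:ℝ), lam s * h s)) :=
      intervalIntegral_tendsto_integral_Ioi 0 key_int tendsto_id
    have heq : (fun t => 1 + ∫ s in (0:ℝ)..t, lam s * h s) =ᶠ[atTop] g := by
      filter_upwards [eventually_ge_atTop (0:ℝ)] with t ht
      have := ftc_g 0 t le_rfl ht
      rw [hg0] at this
      linarith
    exact Tendsto.congr' heq (tendsto_const_nhds.add hlim0)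
  · -- the inequality
    apply add_le_add_right
    apply setIntegral_mono_on hb₀ key_int measurableSet_Ioi
    intro s hs
    have hs0 : (0:ℝ) ≤ s := le_of_lt hs
    have := hh_ge s hs0
    have hl := hlamnn s hs0
    calc s * lam s = lam s * s := mul_comm _ _
      _ ≤ lam s * h s := mul_le_mul_of_nonneg_left this hl
end

section
/- For any integer n ≥ 2, the limit lim_{r→∞} rⁿ/(n·∫₀^r h(t)^{n−1} dt) exists and equals (1 + ∫₀^∞ λ(s)·h(s) ds)^{−(n−1)}; in particular this limit is at most (1 + b₀)^{−(n−1)}. -/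
open Set Filter MeasureTheory

lemma cesaro_weighted (m : ℕ) (ψ : ℝ → ℝ) (hψ : ContinuousOn ψ (Ici 0)) (L : ℝ)
    (hl : Tendsto (fun s => ψ s / s ^ m) atTop (nhds L)) :
    Tendsto (fun r => ((m : ℝ) + 1) * (∫ t in (0:ℝ)..r, ψ t) / r ^ (m + 1))
      atTop (nhds L) := by
  have hint : ∀ a b : ℝ, 0 ≤ a → IntervalIntegrable (fun t => ψ t - L * t ^ m) volume a b ∨ True := fun _ _ _ => Or.inr trivial
  rw [Metric.tendsto_atTop] at hl ⊢
  intro ε hε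
  obtain ⟨R₀, hR₀⟩ := hl (ε / 2) (by positivity)
  set R : ℝ := max R₀ 1 with hRdef
  have hR1 : (1:ℝ) ≤ R := le_max_right _ _
  have hRpos : (0:ℝ) < R := lt_of_lt_of_le one_pos hR1
  set D : ℝ → ℝ := fun t => ψ t - L * t ^ m with hD
  have hDcont : ContinuousOn D (Ici 0) := hψ.sub (continuousOn_const.mul (continuousOn_pow m))
  have hDint : ∀ a b : ℝ, 0 ≤ a → 0 ≤ b → IntervalIntegrable D volume a b := by
    intro a b ha hb
    apply ContinuousOn.intervalIntegrable
    exact hDcont.mono (fun x hx => by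
      rcases le_total a b with hab | hab
      · rw [uIcc_of_le hab] at hx; exact le_trans ha hx.1
      · rw [uIcc_of_ge hab] at hx; exact le_trans hb hx.1)
  have hψint : ∀ a b : ℝ, 0 ≤ a → 0 ≤ b → IntervalIntegrable ψ volume a b := by
    intro a b ha hb
    apply ContinuousOn.intervalIntegrable
    exact hψ.mono (fun x hx => by
      rcases le_total a b with hab | hab
      · rw [uIcc_of_le hab] at hx; exact le_trans ha hx.1
      · rw [uIcc_of_ge hab] at hx; exact le_trans hb hx.1)
  have hkey : ∀ s : ℝ, R ≤ s → |D s| ≤ ε / 2 * s ^ m := by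
    intro s hs
    have hs1 : (1:ℝ) ≤ s := hR1.trans hs
    have hspos : (0:ℝ) < s := lt_of_lt_of_le one_pos hs1
    have hspow : (0:ℝ) < s ^ m := pow_pos hspos m
    have := hR₀ s (le_trans (le_max_left _ _) hs)
    rw [Real.dist_eq] at this
    have h2 : |ψ s / s ^ m - L| * s ^ m ≤ ε / 2 * s ^ m :=
      mul_le_mul_of_nonneg_right this.le hspow.le
    calc |D s| = |(ψ s / s ^ m - L) * s ^ m| := by
          rw [hD]; congr 1; field_simp
      _ = |ψ s / s ^ m - L| * s ^ m := by rw [abs_mul, abs_of_pos hspow]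
      _ ≤ ε / 2 * s ^ m := h2
  set C : ℝ := |∫ t in (0:ℝ)..R, D t| with hC
  have hCnn : 0 ≤ C := abs_nonneg _
  refine ⟨max R (2 * ((m:ℝ)+1) * C / ε + 1), fun r hr => ?_⟩
  have hrR : R ≤ r := le_trans (le_max_left _ _) hr
  have hr1 : (1:ℝ) ≤ r := hR1.trans hrR
  have hrpos : (0:ℝ) < r := lt_of_lt_of_le one_pos hr1
  have hrpow : (0:ℝ) < r ^ (m+1) := pow_pos hrpos _
  have hrbig : 2 * ((m:ℝ)+1) * C / ε + 1 ≤ r := le_trans (le_max_right _ _) hr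
  have hrpowbig : 2 * ((m:ℝ)+1) * C / ε + 1 ≤ r ^ (m+1) :=
    le_trans hrbig (le_self_pow₀ hr1 (Nat.succ_ne_zero m))
  -- main decomposition
  have hsplit : (∫ t in (0:ℝ)..r, D t) = (∫ t in (0:ℝ)..R, D t) + ∫ t in R..r, D t :=
    (intervalIntegral.integral_add_adjacent_intervals (hDint 0 R le_rfl hRpos.le)
      (hDint R r hRpos.le hrpos.le)).symm
  have htail : |∫ t in R..r, D t| ≤ ε / 2 * (r ^ (m+1)) / ((m:ℝ)+1) := by
    have h1 : |∫ t in R..r, D t| ≤ ∫ t in R..r, |D t| :=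
      intervalIntegral.abs_integral_le_integral_abs hrR
    have h2 : (∫ t in R..r, |D t|) ≤ ∫ t in R..r, ε / 2 * t ^ m := by
      apply intervalIntegral.integral_mono_on hrR ((hDint R r hRpos.le hrpos.le).abs)
        (by apply ContinuousOn.intervalIntegrable; fun_prop)
      intro x hx
      exact hkey x hx.1
    have h3 : (∫ t in R..r, ε / 2 * t ^ m) = ε / 2 * ((r ^ (m+1) - R ^ (m+1)) / ((m:ℝ)+1)) := by
      rw [intervalIntegral.integral_const_mul, integral_pow]
    have h4 : ε / 2 * ((r ^ (m+1) - R ^ (m+1)) / ((m:ℝ)+1)) ≤ ε / 2 * (r ^ (m+1)) / ((m:ℝ)+1) := by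
      rw [mul_div_assoc]
      apply mul_le_mul_of_nonneg_left _ (by positivity)
      apply div_le_div_of_nonneg_right _ (by positivity)
      · nlinarith [pow_pos hRpos (m+1)]
    calc |∫ t in R..r, D t| ≤ ∫ t in R..r, |D t| := h1
      _ ≤ ∫ t in R..r, ε / 2 * t ^ m := h2
      _ = ε / 2 * ((r ^ (m+1) - R ^ (m+1)) / ((m:ℝ)+1)) := h3
      _ ≤ _ := h4
  have hDtot : |∫ t in (0:ℝ)..r, D t| ≤ C + ε / 2 * (r ^ (m+1)) / ((m:ℝ)+1) := by
    rw [hsplit]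
    exact le_trans (abs_add_le _ _) (add_le_add le_rfl htail)
  -- rewrite F r - L
  have hFL : ((m : ℝ) + 1) * (∫ t in (0:ℝ)..r, ψ t) / r ^ (m + 1) - L
      = ((m:ℝ)+1) * (∫ t in (0:ℝ)..r, D t) / r ^ (m+1) := by
    have hpow : (∫ t in (0:ℝ)..r, L * t ^ m) = L * (r ^ (m+1) / ((m:ℝ)+1)) := by
      rw [intervalIntegral.integral_const_mul, integral_pow]
      ring_nf
    have : (∫ t in (0:ℝ)..r, D t) = (∫ t in (0:ℝ)..r, ψ t) - L * (r ^ (m+1) / ((m:ℝ)+1)) := by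
      rw [← hpow, hD]
      exact intervalIntegral.integral_sub (hψint 0 r le_rfl hrpos.le)
        (by apply ContinuousOn.intervalIntegrable; fun_prop)
    rw [this]
    field_simp
  rw [Real.dist_eq, hFL]
  have hnum : |((m:ℝ)+1) * (∫ t in (0:ℝ)..r, D t)| ≤ ((m:ℝ)+1) * C + ε / 2 * r ^ (m+1) := by
    rw [abs_mul, abs_of_pos (by positivity : (0:ℝ) < (m:ℝ)+1)]
    calc ((m:ℝ)+1) * |∫ t in (0:ℝ)..r, D t| ≤ ((m:ℝ)+1) * (C + ε / 2 * (r ^ (m+1)) / ((m:ℝ)+1)) :=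
          mul_le_mul_of_nonneg_left hDtot (by positivity)
      _ = ((m:ℝ)+1) * C + ε / 2 * r ^ (m+1) := by field_simp
  have hCsmall : ((m:ℝ)+1) * C < ε / 2 * r ^ (m+1) := by
    have h5 : ε / 2 * r ^ (m+1) ≥ ε / 2 * (2 * ((m:ℝ)+1) * C / ε + 1) :=
      mul_le_mul_of_nonneg_left hrpowbig (by positivity)
    have h6 : ε / 2 * (2 * ((m:ℝ)+1) * C / ε + 1) = ((m:ℝ)+1) * C + ε / 2 := by
      field_simp
    nlinarith
  rw [abs_div, abs_of_pos hrpow, div_lt_iff₀ hrpow]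
  calc |((m:ℝ)+1) * (∫ t in (0:ℝ)..r, D t)| ≤ ((m:ℝ)+1) * C + ε / 2 * r ^ (m+1) := hnum
    _ < ε / 2 * r ^ (m+1) + ε / 2 * r ^ (m+1) := by linarith
    _ = ε * r ^ (m+1) := by ring


/-- For `n ≥ 2`, `lim_{r→∞} rⁿ/(n ∫₀^r h^{n-1}) = (1 + ∫₀^∞ λ h)^{-(n-1)} ≤ (1+b₀)^{-(n-1)}`. -/
theorem stmt_12 (lam h : ℝ → ℝ)
    (hlamc : ContinuousOn lam (Ici 0)) (hlamnn : ∀ t ∈ Ici (0 : ℝ), 0 ≤ lam t)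
    (hlamanti : AntitoneOn lam (Ici 0))
    (hb₀ : IntegrableOn (fun s => s * lam s) (Ioi 0))
    (hh : ContDiffOn ℝ 2 h (Ici 0))
    (ode : ∀ t ∈ Ici (0 : ℝ),
      derivWithin (derivWithin h (Ici 0)) (Ici 0) t = lam t * h t)
    (h0 : h 0 = 0) (h'0 : derivWithin h (Ici 0) 0 = 1)
    (n : ℕ) (hn : 2 ≤ n) :
    Tendsto (fun r => r ^ n / ((n : ℝ) * ∫ t in (0 : ℝ)..r, h t ^ (n - 1)))
      atTop (nhds (((1 + ∫ s in Ioi (0 : ℝ), lam s * h s) ^ (n - 1))⁻¹)) ∧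
    ((1 + ∫ s in Ioi (0 : ℝ), lam s * h s) ^ (n - 1))⁻¹ ≤
      ((1 + ∫ s in Ioi (0 : ℝ), s * lam s) ^ (n - 1))⁻¹ := by
  set g := derivWithin h (Ici 0) with hgdef
  have udiff : UniqueDiffOn ℝ (Ici (0:ℝ)) := uniqueDiffOn_Ici 0
  have hg1 : ContDiffOn ℝ 1 g (Ici 0) := hh.derivWithin udiff (by norm_num)
  have hgc : ContinuousOn g (Ici 0) := hg1.continuousOn
  have hhc : ContinuousOn h (Ici 0) := hh.continuousOn
  have hgd : ∀ t ∈ Ici (0:ℝ), HasDerivWithinAt g (lam t * h t) (Ici 0) t := by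
    intro t ht
    have := ((hg1.differentiableOn one_ne_zero) t ht).hasDerivWithinAt
    rwa [ode t ht] at this
  have hhd : ∀ t ∈ Ici (0:ℝ), HasDerivWithinAt h (g t) (Ici 0) t := fun t ht =>
    ((hh.differentiableOn (by norm_num)) t ht).hasDerivWithinAt
  have hlh_cont : ContinuousOn (fun t => lam t * h t) (Ici 0) := hlamc.mul hhc
  have subIcc : ∀ a b : ℝ, 0 ≤ a → Icc a b ⊆ Ici (0:ℝ) := fun a b ha x hx => le_trans ha hx.1
  have intcont : ∀ (f : ℝ → ℝ), ContinuousOn f (Ici 0) → ∀ a b : ℝ, 0 ≤ a → a ≤ b →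
      IntervalIntegrable f volume a b := by
    intro f hf a b ha hab
    apply ContinuousOn.intervalIntegrable
    rw [uIcc_of_le hab]; exact hf.mono (subIcc a b ha)
  have ftcg : ∀ a b : ℝ, 0 ≤ a → a ≤ b → (∫ t in a..b, lam t * h t) = g b - g a := by
    intro a b ha hab
    exact intervalIntegral.integral_eq_sub_of_hasDeriv_right_of_le hab
      (hgc.mono (subIcc a b ha))
      (fun x hx => ((hgd x (ha.trans hx.1.le)).hasDerivAt
        (Ici_mem_nhds (lt_of_le_of_lt ha hx.1))).hasDerivWithinAt)
      (intcont _ hlh_cont a b ha hab)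
  have ftch : ∀ a b : ℝ, 0 ≤ a → a ≤ b → (∫ t in a..b, g t) = h b - h a := by
    intro a b ha hab
    exact intervalIntegral.integral_eq_sub_of_hasDeriv_right_of_le hab
      (hhc.mono (subIcc a b ha))
      (fun x hx => ((hhd x (ha.trans hx.1.le)).hasDerivAt
        (Ici_mem_nhds (lt_of_le_of_lt ha hx.1))).hasDerivWithinAt)
      (intcont _ hgc a b ha hab)
  have hg0 : g 0 = 1 := h'0
  -- nonnegativity of h
  have hpos : ∀ r : ℝ, 0 ≤ r → 0 ≤ h r := by
    by_contra hcon
    push_neg at hcon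
    obtain ⟨r, hr0, hrneg⟩ := hcon
    have hrpos : 0 < r := by
      rcases eq_or_lt_of_le hr0 with e | e
      · exfalso; rw [← e, h0] at hrneg; exact lt_irrefl 0 hrneg
      · exact e
    set S : Set ℝ := {t | t ∈ Icc 0 r ∧ ∀ s ∈ Icc 0 t, 0 ≤ h s} with hSdef
    have h0S : (0:ℝ) ∈ S := by
      refine ⟨⟨le_rfl, hr0⟩, fun s hs => ?_⟩
      have hs0 : s = 0 := le_antisymm hs.2 hs.1
      rw [hs0, h0]
    have hSne : S.Nonempty := ⟨0, h0S⟩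
    have hSbdd : BddAbove S := ⟨r, fun t ht => ht.1.2⟩
    set T := sSup S with hTdef
    have hT0 : 0 ≤ T := le_csSup hSbdd h0S
    have hTr : T ≤ r := csSup_le hSne (fun t ht => ht.1.2)
    have hTlt : ∀ s ∈ Ico 0 T, 0 ≤ h s := by
      intro s hs
      obtain ⟨t, htS, hst⟩ := exists_lt_of_lt_csSup hSne hs.2
      exact htS.2 s ⟨hs.1, hst.le⟩
    have hTmem : ∀ s ∈ Icc 0 T, 0 ≤ h s := by
      intro s hs
      rcases lt_or_eq_of_le hs.2 with hlt | heq
      · exact hTlt s ⟨hs.1, hlt⟩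
      · rcases eq_or_lt_of_le hs.1 with h0s | h0s
        · rw [← h0s, h0]
        · have hne : (nhdsWithin s (Ico 0 s)).NeBot := by
            apply mem_closure_iff_nhdsWithin_neBot.mp
            rw [closure_Ico h0s.ne]
            exact ⟨h0s.le, le_rfl⟩
          have hcw : Tendsto h (nhdsWithin s (Ico 0 s)) (nhds (h s)) :=
            (hhc s h0s.le).mono_left (nhdsWithin_mono s (fun x hx => hx.1))
          apply ge_of_tendsto hcw
          apply eventually_nhdsWithin_of_forall
          intro x hx
          exact hTlt x ⟨hx.1, heq ▸ hx.2⟩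
    have goneT : ∀ b ∈ Icc 0 T, 1 ≤ g b := by
      intro b hb
      have hft := ftcg 0 b le_rfl hb.1
      have hnn : 0 ≤ ∫ t in (0:ℝ)..b, lam t * h t :=
        intervalIntegral.integral_nonneg hb.1
          (fun x hx => mul_nonneg (hlamnn x hx.1) (hTmem x ⟨hx.1, hx.2.trans hb.2⟩))
      rw [hg0] at hft; linarith
    have hTge : T ≤ h T := by
      have hft := ftch 0 T le_rfl hT0
      rw [h0, sub_zero] at hft
      rw [← hft]
      calc T = ∫ _t in (0:ℝ)..T, (1:ℝ) := by simp
        _ ≤ ∫ t in (0:ℝ)..T, g t := intervalIntegral.integral_mono_on hT0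
            intervalIntegrable_const (intcont _ hgc 0 T le_rfl hT0)
            (fun x hx => goneT x hx)
    have hTltr : T < r := by
      rcases lt_or_eq_of_le hTr with hlt | heq
      · exact hlt
      · exact absurd (hTmem r ⟨hr0, heq ▸ le_rfl⟩) (not_le.2 hrneg)
    have hext : ∃ δ > 0, T + δ ≤ r ∧ ∀ s ∈ Ioc T (T + δ), 0 < h s := by
      rcases eq_or_lt_of_le hT0 with hT0' | hT0'
      · -- T = 0 : use the derivative at 0
        have hslope := hasDerivWithinAt_iff_tendsto_slope.1 (hhd 0 self_mem_Ici)
        rw [hg0] at hslope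
        have hev : slope h 0 ⁻¹' Ioi 0 ∈ nhdsWithin 0 (Ici 0 \ {0}) :=
          hslope (Ioi_mem_nhds one_pos)
        rw [Metric.mem_nhdsWithin_iff] at hev
        obtain ⟨ε, hε, hball⟩ := hev
        refine ⟨min (ε/2) r, lt_min (by positivity) hrpos, ?_, ?_⟩
        · rw [← hT0', zero_add]; exact min_le_right _ _
        · intro s hs
          have hs0 : 0 < s := lt_of_le_of_lt hT0 hs.1
          have hsε : s < ε := by
            have h2 := hs.2
            rw [← hT0', zero_add] at h2
            have := min_le_left (ε/2) r
            linarith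
          have hmem : s ∈ Metric.ball (0:ℝ) ε ∩ (Ici 0 \ {0}) := by
            refine ⟨?_, hs0.le, ?_⟩
            · rw [Metric.mem_ball, Real.dist_eq, sub_zero, abs_of_pos hs0]; exact hsε
            · simp only [mem_singleton_iff]; exact hs0.ne'
          have hsl : 0 < slope h 0 s := hball hmem
          rw [slope_def_field, h0, sub_zero, sub_zero] at hsl
          have := mul_pos hsl hs0
          rwa [div_mul_cancel₀ _ hs0.ne'] at this
      · -- 0 < T
        have hTpos_h : 0 < h T := lt_of_lt_of_le hT0' hTge
        have hcw : ContinuousWithinAt h (Ici 0) T := hhc T hT0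
        have hev : h ⁻¹' Ioi 0 ∈ nhdsWithin T (Ici 0) := hcw (Ioi_mem_nhds hTpos_h)
        rw [Metric.mem_nhdsWithin_iff] at hev
        obtain ⟨ε, hε, hball⟩ := hev
        refine ⟨min (ε/2) (r - T), lt_min (by positivity) (by linarith), ?_, ?_⟩
        · have := min_le_right (ε/2) (r - T); linarith
        · intro s hs
          have hsT : T < s := hs.1
          have h2 := hs.2
          have h3 := min_le_left (ε/2) (r - T)
          have hmem : s ∈ Metric.ball T ε ∩ Ici 0 := by
            refine ⟨?_, le_trans hT0 hsT.le⟩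
            rw [Metric.mem_ball, Real.dist_eq, abs_of_pos (by linarith : (0:ℝ) < s - T)]
            linarith
          exact hball hmem
    obtain ⟨δ, hδ, hδr, hδpos⟩ := hext
    have hTS : T + δ ∈ S := by
      refine ⟨⟨by linarith, hδr⟩, fun s hs => ?_⟩
      rcases le_or_gt s T with hsT | hsT
      · exact hTmem s ⟨hs.1, hsT⟩
      · exact (hδpos s ⟨hsT, hs.2⟩).le
    have hcontra := le_csSup hSbdd hTS
    rw [← hTdef] at hcontra
    linarith
  have gmono : ∀ a b : ℝ, 0 ≤ a → a ≤ b → g a ≤ g b := by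
    intro a b ha hab
    have hft := ftcg a b ha hab
    have hnn : 0 ≤ ∫ t in a..b, lam t * h t :=
      intervalIntegral.integral_nonneg hab
        (fun x hx => mul_nonneg (hlamnn x (ha.trans hx.1)) (hpos x (ha.trans hx.1)))
    linarith
  have gone : ∀ b : ℝ, 0 ≤ b → 1 ≤ g b := fun b hb => by
    have := gmono 0 b le_rfl hb; rwa [hg0] at this
  have gpos : ∀ b : ℝ, 0 ≤ b → 0 < g b := fun b hb => lt_of_lt_of_le one_pos (gone b hb)
  have hge : ∀ s : ℝ, 0 ≤ s → s ≤ h s := by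
    intro s hs
    have hft := ftch 0 s le_rfl hs
    rw [h0, sub_zero] at hft
    rw [← hft]
    calc s = ∫ _t in (0:ℝ)..s, (1:ℝ) := by simp
      _ ≤ ∫ t in (0:ℝ)..s, g t :=
        intervalIntegral.integral_mono_on hs intervalIntegrable_const
          (intcont _ hgc 0 s le_rfl hs) (fun x hx => gone x hx.1)
  have hle : ∀ s : ℝ, 0 ≤ s → h s ≤ s * g s := by
    intro s hs
    have hft := ftch 0 s le_rfl hs
    rw [h0, sub_zero] at hft
    rw [← hft]
    calc (∫ t in (0:ℝ)..s, g t) ≤ ∫ _t in (0:ℝ)..s, g s :=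
        intervalIntegral.integral_mono_on hs (intcont _ hgc 0 s le_rfl hs)
          intervalIntegrable_const (fun x hx => gmono x s hx.1 hx.2)
      _ = s * g s := by simp
  set b₀ : ℝ := ∫ s in Ioi (0:ℝ), s * lam s with hb0
  have hb0nn : 0 ≤ b₀ := setIntegral_nonneg measurableSet_Ioi
    (fun x hx => mul_nonneg (le_of_lt hx) (hlamnn x (le_of_lt hx : (0:ℝ) ≤ x)))
  -- bound on g
  have gbound : ∀ r : ℝ, 0 ≤ r → g r ≤ Real.exp b₀ := by
    intro r hr
    have hqcont : ContinuousOn (fun t => lam t * h t / g t) (Ici 0) :=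
      hlh_cont.div hgc (fun t ht => (gpos t ht).ne')
    have hlog : Real.log (g r) - Real.log (g 0) = ∫ t in (0:ℝ)..r, lam t * h t / g t := by
      symm
      apply intervalIntegral.integral_eq_sub_of_hasDeriv_right_of_le hr
      · exact ContinuousOn.log (hgc.mono (subIcc 0 r le_rfl)) (fun t ht => (gpos t ht.1).ne')
      · intro x hx
        have hx0 : (0:ℝ) ≤ x := hx.1.le
        have hda : HasDerivAt g (lam x * h x) x := (hgd x hx0).hasDerivAt (Ici_mem_nhds hx.1)
        exact (hda.log (gpos x hx0).ne').hasDerivWithinAt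
      · exact intcont _ hqcont 0 r le_rfl hr
    rw [hg0, Real.log_one, sub_zero] at hlog
    have hcont_tlam : ContinuousOn (fun t : ℝ => t * lam t) (Ici 0) :=
      (continuous_id.continuousOn).mul hlamc
    have hstep1 : (∫ t in (0:ℝ)..r, lam t * h t / g t) ≤ ∫ t in (0:ℝ)..r, t * lam t := by
      apply intervalIntegral.integral_mono_on hr (intcont _ hqcont 0 r le_rfl hr)
        (intcont _ hcont_tlam 0 r le_rfl hr)
      intro x hx
      rw [div_le_iff₀ (gpos x hx.1)]
      have hb := mul_le_mul_of_nonneg_left (hle x hx.1) (hlamnn x hx.1)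
      nlinarith
    have hstep2 : (∫ t in (0:ℝ)..r, t * lam t) ≤ b₀ := by
      rw [intervalIntegral.integral_of_le hr, hb0]
      apply setIntegral_mono_set hb₀
      · filter_upwards [ae_restrict_mem measurableSet_Ioi] with x hx
        exact mul_nonneg (le_of_lt hx) (hlamnn x (le_of_lt hx : (0:ℝ) ≤ x))
      · exact HasSubset.Subset.eventuallyLE Ioc_subset_Ioi_self
    have hfinal : Real.log (g r) ≤ b₀ := by rw [hlog]; linarith
    calc g r = Real.exp (Real.log (g r)) := (Real.exp_log (gpos r hr)).symm
      _ ≤ Real.exp b₀ := Real.exp_le_exp.2 hfinal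
  -- integrability of lam * h on Ioi 0
  have hint_lh : IntegrableOn (fun s => lam s * h s) (Ioi 0) := by
    have hmeas : AEStronglyMeasurable (fun s => lam s * h s) (volume.restrict (Ioi 0)) :=
      (hlh_cont.mono (Ioi_subset_Ici le_rfl)).aestronglyMeasurable measurableSet_Ioi
    apply Integrable.mono' (hb₀.const_mul (Real.exp b₀)) hmeas
    rw [ae_restrict_iff' measurableSet_Ioi]
    filter_upwards with s hs
    have hs0 : (0:ℝ) ≤ s := le_of_lt hs
    have h1 : h s ≤ s * Real.exp b₀ := by
      calc h s ≤ s * g s := hle s hs0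
        _ ≤ s * Real.exp b₀ := mul_le_mul_of_nonneg_left (gbound s hs0) hs0
    have h2 : 0 ≤ lam s * h s := mul_nonneg (hlamnn s hs0) (hpos s hs0)
    rw [Real.norm_eq_abs, abs_of_nonneg h2]
    calc lam s * h s ≤ lam s * (s * Real.exp b₀) :=
        mul_le_mul_of_nonneg_left h1 (hlamnn s hs0)
      _ = Real.exp b₀ * (s * lam s) := by ring
  set c : ℝ := 1 + ∫ s in Ioi (0:ℝ), lam s * h s with hcdef
  have hcint_nn : 0 ≤ ∫ s in Ioi (0:ℝ), lam s * h s := setIntegral_nonneg measurableSet_Ioi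
    (fun x hx => mul_nonneg (hlamnn x (le_of_lt hx : (0:ℝ) ≤ x)) (hpos x (le_of_lt hx)))
  have hcpos : 0 < c := by rw [hcdef]; linarith
  -- g tends to c
  have hgtend : Tendsto g atTop (nhds c) := by
    have h1 := intervalIntegral_tendsto_integral_Ioi 0 hint_lh tendsto_id
    have h2 : Tendsto (fun r : ℝ => 1 + ∫ t in (0:ℝ)..r, lam t * h t) atTop (nhds c) := by
      rw [hcdef]; exact tendsto_const_nhds.add h1
    apply h2.congr'
    filter_upwards [eventually_ge_atTop (0:ℝ)] with r hr
    have hft := ftcg 0 r le_rfl hr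
    rw [hg0] at hft
    linarith
  -- h r / r tends to c
  have hhr : Tendsto (fun r => h r / r) atTop (nhds c) := by
    have hl0 : Tendsto (fun s => g s / s ^ 0) atTop (nhds c) := by simpa using hgtend
    apply (cesaro_weighted 0 g hgc c hl0).congr'
    filter_upwards [eventually_ge_atTop (0:ℝ)] with r hr
    have hft := ftch 0 r le_rfl hr
    rw [h0, sub_zero] at hft
    simp [hft]
  -- main limit
  have hn1 : n - 1 + 1 = n := by omega
  have htendpow : Tendsto (fun s => h s ^ (n-1) / s ^ (n-1)) atTop (nhds (c ^ (n-1))) :=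
    (hhr.pow (n-1)).congr (fun s => div_pow _ _ _)
  have hmain : Tendsto (fun r => (n:ℝ) * (∫ t in (0:ℝ)..r, h t ^ (n-1)) / r ^ n)
      atTop (nhds (c ^ (n-1))) := by
    have h' := cesaro_weighted (n-1) (fun t => h t ^ (n-1)) (hhc.pow _) (c ^ (n-1)) htendpow
    rw [hn1] at h'
    have hcast : ((n-1:ℕ):ℝ) + 1 = (n:ℝ) := by
      rw [Nat.cast_sub (by omega : 1 ≤ n)]; push_cast; ring
    rw [hcast] at h'
    exact h'
  constructor
  · have hfin := hmain.inv₀ (pow_ne_zero _ hcpos.ne')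
    exact hfin.congr (fun r => inv_div _ _)
  · have hineq : b₀ ≤ ∫ s in Ioi (0:ℝ), lam s * h s := by
      apply setIntegral_mono_on hb₀ hint_lh measurableSet_Ioi
      intro x hx
      calc x * lam x = lam x * x := mul_comm _ _
        _ ≤ lam x * h x := mul_le_mul_of_nonneg_left (hge x (le_of_lt hx)) (hlamnn x (le_of_lt hx : (0:ℝ) ≤ x))
    have h1b : 0 < 1 + b₀ := by linarith
    have hpow : (1 + b₀) ^ (n-1) ≤ c ^ (n-1) :=
      pow_le_pow_left₀ h1b.le (by rw [hcdef]; linarith) _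
    exact inv_anti₀ (pow_pos h1b _) hpow
end

section
/- For any real σ with 0 ≤ σ < 1 and any integer m ≥ 1 one has lim_{r→∞} σ·h(σr)^m/h(r)^m = σ^{m+1}; equivalently, lim_{r→∞} (1 − σ·h(σr)^m/h(r)^m) = 1 − σ^{m+1}. -/
open Set Filter MeasureTheory

/-- For `0 ≤ σ < 1` and `m ≥ 1`: `lim_{r→∞} σ h(σr)ᵐ/h(r)ᵐ = σ^{m+1}`, equivalently
`lim_{r→∞} (1 - σ h(σr)ᵐ/h(r)ᵐ) = 1 - σ^{m+1}`. -/
theorem stmt_14 (lam h : ℝ → ℝ)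
    (hlamc : ContinuousOn lam (Ici 0)) (hlamnn : ∀ t ∈ Ici (0 : ℝ), 0 ≤ lam t)
    (hlamanti : AntitoneOn lam (Ici 0))
    (hb₀ : IntegrableOn (fun s => s * lam s) (Ioi 0))
    (hh : ContDiffOn ℝ 2 h (Ici 0))
    (ode : ∀ t ∈ Ici (0 : ℝ),
      derivWithin (derivWithin h (Ici 0)) (Ici 0) t = lam t * h t)
    (h0 : h 0 = 0) (h'0 : derivWithin h (Ici 0) 0 = 1)
    (σ : ℝ) (hσ0 : 0 ≤ σ) (hσ1 : σ < 1) (m : ℕ) (hm : 1 ≤ m) :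
    Tendsto (fun r => σ * h (σ * r) ^ m / h r ^ m) atTop (nhds (σ ^ (m + 1))) ∧
    Tendsto (fun r => 1 - σ * h (σ * r) ^ m / h r ^ m) atTop
      (nhds (1 - σ ^ (m + 1))) := by
  set g : ℝ → ℝ := derivWithin h (Ici 0) with hg_def
  have hhc : ContinuousOn h (Ici 0) := hh.continuousOn
  have hgC1 : ContDiffOn ℝ 1 g (Ici 0) :=
    hh.derivWithin (uniqueDiffOn_Ici 0) (by norm_num)
  have hgc : ContinuousOn g (Ici 0) := hgC1.continuousOn
  have hderivh : ∀ t ∈ Ici (0:ℝ), HasDerivWithinAt h (g t) (Ici 0) t := by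
    intro t ht
    exact (hh.differentiableOn (by norm_num) t ht).hasDerivWithinAt
  have hderivg : ∀ t ∈ Ici (0:ℝ), HasDerivWithinAt g (lam t * h t) (Ici 0) t := by
    intro t ht
    have := (hgC1.differentiableOn (by norm_num) t ht).hasDerivWithinAt
    rwa [ode t ht] at this
  have hderivh' : ∀ t : ℝ, 0 < t → HasDerivAt h (g t) t := by
    intro t ht
    exact (hderivh t ht.le).hasDerivAt (Ici_mem_nhds ht)
  have hderivg' : ∀ t : ℝ, 0 < t → HasDerivAt g (lam t * h t) t := by
    intro t ht
    exact (hderivg t ht.le).hasDerivAt (Ici_mem_nhds ht)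
  -- Step 1: bootstrap positivity
  have key : ∀ t ∈ Ici (0:ℝ), t ≤ h t ∧ 1 ≤ g t := by
    intro b hb
    set s : Set ℝ := {t | ∀ u ∈ Icc (0:ℝ) t, u ≤ h u ∧ 1 ≤ g u} with hsdef
    suffices hsub : Icc (0:ℝ) b ⊆ s by
      exact hsub ⟨hb, le_rfl⟩ b ⟨hb, le_rfl⟩
    apply IsClosed.Icc_subset_of_forall_exists_gt
    · -- closedness
      apply IsSeqClosed.isClosed
      intro xn x hxn hx
      have hmem : ∀ n, 0 ≤ xn n := fun n => (hxn n).2.1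
      have hxIcc : x ∈ Icc (0:ℝ) b :=
        isClosed_Icc.mem_of_tendsto hx (Eventually.of_forall fun n => (hxn n).2)
      refine ⟨?_, hxIcc⟩
      intro u hu
      rcases eq_or_lt_of_le hu.2 with rfl | hult
      · -- u = x : pass to the limit
        have hxn_tendsto : Tendsto xn atTop (nhdsWithin u (Ici (0:ℝ))) :=
          tendsto_nhdsWithin_iff.mpr ⟨hx, Eventually.of_forall hmem⟩
        have hhx : Tendsto (fun n => h (xn n)) atTop (nhds (h u)) :=
          (hhc u hu.1).tendsto.comp hxn_tendsto
        have hgx : Tendsto (fun n => g (xn n)) atTop (nhds (g u)) :=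
          (hgc u hu.1).tendsto.comp hxn_tendsto
        constructor
        · exact le_of_tendsto_of_tendsto' hx hhx
            (fun n => ((hxn n).1 (xn n) ⟨hmem n, le_rfl⟩).1)
        · exact ge_of_tendsto hgx
            (Eventually.of_forall fun n => ((hxn n).1 (xn n) ⟨hmem n, le_rfl⟩).2)
      · -- u < x : eventually below some xn n
        obtain ⟨n, hn⟩ := (hx.eventually (eventually_gt_nhds hult)).exists
        exact (hxn n).1 u ⟨hu.1, hn.le⟩
    · -- 0 ∈ s
      intro u hu
      have : u = 0 := le_antisymm hu.2 hu.1
      subst this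
      exact ⟨by rw [h0], by rw [h'0]⟩
    · -- step forward
      rintro x ⟨hxs, hx0, hxb⟩ y hy
      have hgx : 1 ≤ g x := (hxs x ⟨hx0, le_rfl⟩).2
      have hhx : x ≤ h x := (hxs x ⟨hx0, le_rfl⟩).1
      obtain ⟨δ, hδ, hδprop⟩ := Metric.continuousWithinAt_iff.1 (hgc x hx0) 1 one_pos
      set z : ℝ := min (x + δ / 2) y with hzdef
      have hxz : x < z := lt_min (by linarith) hy
      have hzy : z ≤ y := min_le_right _ _
      have hsubIcc : Icc x z ⊆ Ici (0:ℝ) := fun u hu => le_trans hx0 hu.1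
      have hgposz : ∀ u ∈ Icc x z, 0 < g u := by
        intro u hu
        have hdist : dist u x < δ := by
          rw [Real.dist_eq, abs_of_nonneg (by linarith [hu.1])]
          have : z ≤ x + δ / 2 := min_le_left _ _
          linarith [hu.2]
        have := hδprop (hsubIcc hu) hdist
        rw [Real.dist_eq, abs_lt] at this
        linarith
      have hpos : ∀ u ∈ Ioo x z, 0 < u := fun u hu => lt_of_le_of_lt hx0 hu.1
      have hmono_h : MonotoneOn h (Icc x z) := by
        apply monotoneOn_of_hasDerivWithinAt_nonneg (f' := g) (convex_Icc x z)
          (hhc.mono hsubIcc)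
        · intro u hu
          rw [interior_Icc] at hu
          exact (hderivh' u (hpos u hu)).hasDerivWithinAt
        · intro u hu
          rw [interior_Icc] at hu
          exact (hgposz u (Ioo_subset_Icc_self hu)).le
      have hh_nonneg : ∀ u ∈ Icc x z, 0 ≤ h u := fun u hu =>
        le_trans (le_trans hx0 hhx) (hmono_h ⟨le_rfl, hxz.le⟩ hu hu.1)
      have hmono_g : MonotoneOn g (Icc x z) := by
        apply monotoneOn_of_hasDerivWithinAt_nonneg (f' := fun u => lam u * h u)
          (convex_Icc x z) (hgc.mono hsubIcc)
        · intro u hu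
          rw [interior_Icc] at hu
          exact (hderivg' u (hpos u hu)).hasDerivWithinAt
        · intro u hu
          rw [interior_Icc] at hu
          exact mul_nonneg (hlamnn u (hpos u hu).le)
            (hh_nonneg u (Ioo_subset_Icc_self hu))
      have hg1 : ∀ u ∈ Icc x z, 1 ≤ g u := fun u hu =>
        hgx.trans (hmono_g ⟨le_rfl, hxz.le⟩ hu hu.1)
      have hmono_h1 : MonotoneOn (fun u => h u - u) (Icc x z) := by
        apply monotoneOn_of_hasDerivWithinAt_nonneg (f' := fun u => g u - 1)
          (convex_Icc x z) ((hhc.mono hsubIcc).sub continuousOn_id)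
        · intro u hu
          rw [interior_Icc] at hu
          exact ((hderivh' u (hpos u hu)).sub (hasDerivAt_id u)).hasDerivWithinAt
        · intro u hu
          rw [interior_Icc] at hu
          linarith [hg1 u (Ioo_subset_Icc_self hu)]
      refine ⟨z, ?_, hxz, hzy⟩
      intro u hu
      rcases le_total u x with h1 | h2
      · exact hxs u ⟨hu.1, h1⟩
      · have huIcc : u ∈ Icc x z := ⟨h2, hu.2⟩
        refine ⟨?_, hg1 u huIcc⟩
        have := hmono_h1 ⟨le_rfl, hxz.le⟩ huIcc h2
        simp only at this
        linarith
  -- Step 2a : h t ≤ t * g t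
  have key2 : ∀ t ∈ Ici (0:ℝ), h t ≤ t * g t := by
    have hmono : MonotoneOn (fun t => t * g t - h t) (Ici (0:ℝ)) := by
      apply monotoneOn_of_hasDerivWithinAt_nonneg (f' := fun t => t * (lam t * h t))
        (convex_Ici 0) ((continuousOn_id.mul hgc).sub hhc)
      · intro x hx
        rw [interior_Ici] at hx
        have hd : HasDerivAt (fun t => t * g t - h t) (x * (lam x * h x)) x := by
          have := ((hasDerivAt_id x).mul (hderivg' x hx)).sub (hderivh' x hx)
          refine this.congr_deriv ?_
          simp only [id_eq]
          ring
        exact hd.hasDerivWithinAt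
      · intro x hx
        rw [interior_Ici] at hx
        have hhx : 0 ≤ h x := le_trans hx.le (key x (mem_Ici.mpr hx.le)).1
        exact mul_nonneg hx.le (mul_nonneg (hlamnn x (mem_Ici.mpr hx.le)) hhx)
    intro t ht
    have := hmono (self_mem_Ici) ht ht
    simp only [h0, zero_mul, sub_zero] at this
    linarith
  -- Step 3 : g bounded
  set b₀ : ℝ := ∫ s in Ioi (0:ℝ), s * lam s with hb₀def
  have hgpos : ∀ u ∈ Ici (0:ℝ), 0 < g u := fun u hu =>
    lt_of_lt_of_le one_pos (key u hu).2
  have key3 : ∀ t ∈ Ici (0:ℝ), g t ≤ Real.exp b₀ := by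
    intro b hb
    have hsub : Real.log (g b) - Real.log (g 0) ≤ ∫ y in (0:ℝ)..b, y * lam y :=
      intervalIntegral.sub_le_integral_of_hasDeriv_right_of_le hb
        ((hgc.mono Icc_subset_Ici_self).log
          (fun x hx => ne_of_gt (hgpos x hx.1)))
        (fun x hx => (((hderivg' x hx.1).log
          (ne_of_gt (hgpos x hx.1.le)))).hasDerivWithinAt)
        ((continuousOn_id.mul (hlamc.mono Icc_subset_Ici_self)).integrableOn_compact
          isCompact_Icc)
        (fun x hx => by
          rw [div_le_iff₀ (hgpos x hx.1.le)]
          have h1 := key2 x hx.1.le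
          have h2 := hlamnn x hx.1.le
          nlinarith)
    have hint : ∫ y in (0:ℝ)..b, y * lam y ≤ b₀ := by
      rw [intervalIntegral.integral_of_le hb]
      refine setIntegral_mono_set hb₀ ?_ (HasSubset.Subset.eventuallyLE Ioc_subset_Ioi_self)
      refine (ae_restrict_iff' measurableSet_Ioi).2 (ae_of_all _ fun x hx => ?_)
      exact mul_nonneg (le_of_lt hx) (hlamnn x (mem_Ici.mpr (le_of_lt hx)))
    rw [h'0, Real.log_one, sub_zero] at hsub
    calc g b = Real.exp (Real.log (g b)) := (Real.exp_log (hgpos b hb)).symm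
    _ ≤ Real.exp b₀ := Real.exp_le_exp.2 (hsub.trans hint)
  -- Step 2 : monotone ratio
  have keyq : MonotoneOn (fun t => h t / t) (Ioi (0:ℝ)) := by
    apply monotoneOn_of_hasDerivWithinAt_nonneg
      (f' := fun t => (g t * t - h t * 1) / t ^ 2) (convex_Ioi 0)
    · exact (hhc.mono Ioi_subset_Ici_self).div continuousOn_id
        (fun x hx => ne_of_gt hx)
    · intro x hx
      rw [interior_Ioi] at hx
      exact (((hderivh' x hx).div (hasDerivAt_id x) (ne_of_gt hx))).hasDerivWithinAt
    · intro x hx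
      rw [interior_Ioi] at hx
      apply div_nonneg _ (sq_nonneg x)
      have := key2 x (mem_Ici.mpr hx.le)
      nlinarith
  have hqbd : ∀ t : ℝ, 0 < t → h t / t ≤ Real.exp b₀ := by
    intro t ht
    rw [div_le_iff₀ ht]
    calc h t ≤ t * g t := key2 t ht.le
    _ ≤ t * Real.exp b₀ := by
        exact mul_le_mul_of_nonneg_left (key3 t ht.le) ht.le
    _ = Real.exp b₀ * t := mul_comm _ _
  have hq1 : ∀ t : ℝ, 0 < t → 1 ≤ h t / t := by
    intro t ht
    rw [le_div_iff₀ ht, one_mul]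
    exact (key t ht.le).1
  -- Step 4 : limit of h t / t exists
  obtain ⟨L, hL1, hqlim⟩ : ∃ L : ℝ, 1 ≤ L ∧
      Tendsto (fun t => h t / t) atTop (nhds L) := by
    set Q : ℝ → ℝ := fun t => h (max t 1) / max t 1 with hQdef
    have hmax : ∀ t : ℝ, (0:ℝ) < max t 1 := fun t => lt_of_lt_of_le one_pos (le_max_right _ _)
    have hQmono : Monotone Q := by
      intro a b hab
      exact keyq (hmax a) (hmax b) (max_le_max hab le_rfl)
    have hQbdd : BddAbove (range Q) := by
      refine ⟨Real.exp b₀, ?_⟩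
      rintro _ ⟨t, rfl⟩
      exact hqbd _ (hmax t)
    refine ⟨⨆ t, Q t, ?_, ?_⟩
    · have h1 : (1:ℝ) ≤ Q 1 := by
        have : max (1:ℝ) 1 = 1 := max_self 1
        rw [hQdef]; simp only [this]
        simpa using hq1 1 one_pos
      exact h1.trans (le_ciSup hQbdd 1)
    · have hQlim : Tendsto Q atTop (nhds (⨆ t, Q t)) := tendsto_atTop_ciSup hQmono hQbdd
      refine hQlim.congr' ?_
      filter_upwards [eventually_ge_atTop (1:ℝ)] with t ht
      rw [hQdef]
      simp only [max_eq_left ht]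
  have hL0 : L ≠ 0 := by linarith
  -- main computation
  have main : Tendsto (fun r => σ * h (σ * r) ^ m / h r ^ m) atTop (nhds (σ ^ (m + 1))) := by
    rcases hσ0.eq_or_lt with rfl | hσpos
    · have : (fun r : ℝ => (0:ℝ) * h (0 * r) ^ m / h r ^ m) = fun _ => 0 := by
        funext r; simp
      rw [this, zero_pow (Nat.succ_ne_zero m)]
      exact tendsto_const_nhds
    · have hσr : Tendsto (fun r : ℝ => σ * r) atTop atTop :=
        Tendsto.const_mul_atTop hσpos tendsto_id
      have A : Tendsto (fun r => h (σ * r) / (σ * r)) atTop (nhds L) := hqlim.comp hσr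
      have B : Tendsto (fun r => h r / r) atTop (nhds L) := hqlim
      have C : Tendsto (fun r => σ * (σ * (h (σ * r) / (σ * r)) / (h r / r)) ^ m)
          atTop (nhds (σ * (σ * L / L) ^ m)) :=
        tendsto_const_nhds.mul (((tendsto_const_nhds.mul A).div B hL0).pow m)
      have hval : σ * (σ * L / L) ^ m = σ ^ (m + 1) := by
        rw [mul_div_assoc, div_self hL0, mul_one, pow_succ]
        ring
      rw [hval] at C
      refine C.congr' ?_
      filter_upwards [eventually_ge_atTop (1:ℝ)] with r hr
      have hr0 : (0:ℝ) < r := lt_of_lt_of_le one_pos hr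
      have hσr0 : (0:ℝ) < σ * r := mul_pos hσpos hr0
      have hhr : (0:ℝ) < h r := lt_of_lt_of_le hr0 (key r hr0.le).1
      have hhσr : (0:ℝ) < h (σ * r) := lt_of_lt_of_le hσr0 (key _ hσr0.le).1
      have inner : σ * (h (σ * r) / (σ * r)) / (h r / r) = h (σ * r) / h r := by
        field_simp
      rw [inner, div_pow, mul_div_assoc]
  exact ⟨main, tendsto_const_nhds.sub main⟩
end

section
/- Define ψ := ψ₂ + b·ψ₁. Then ψ(t) > 0 for all t ∈ [0,r), g(t) ≤ ψ'(t)/ψ(t) for all t ∈ (0,r), and exp(∫₀^t g(s) ds) ≤ ψ(t) for all t ∈ [0,r). -/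
open Set Filter MeasureTheory

/-- With `ψ := ψ₂ + b ψ₁`: `ψ > 0` on `[0,r)`, `g ≤ ψ'/ψ` on `(0,r)`, and
`exp(∫₀^t g) ≤ ψ(t)` on `[0,r)`, where `g` satisfies the Riccati inequality
`g' + g² ≤ Λ` on `(0,r)` with `g(0) = b`. -/
theorem stmt_16 (Λ g ψ₁ ψ₂ : ℝ → ℝ)
    (hΛc : ContinuousOn Λ (Ici 0)) (hΛnn : ∀ t ∈ Ici (0 : ℝ), 0 ≤ Λ t)
    (r b : ℝ) (hr : 0 < r)
    (hgc : ContinuousOn g (Ico 0 r)) (hg1 : ContDiffOn ℝ 1 g (Ioo 0 r))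
    (hric : ∀ t ∈ Ioo (0 : ℝ) r, deriv g t + g t ^ 2 ≤ Λ t)
    (hg0 : g 0 = b)
    (hψ₁ : ContDiffOn ℝ 2 ψ₁ (Ici 0)) (hψ₂ : ContDiffOn ℝ 2 ψ₂ (Ici 0))
    (odeψ₁ : ∀ t ∈ Ici (0 : ℝ),
      derivWithin (derivWithin ψ₁ (Ici 0)) (Ici 0) t = Λ t * ψ₁ t)
    (odeψ₂ : ∀ t ∈ Ici (0 : ℝ),
      derivWithin (derivWithin ψ₂ (Ici 0)) (Ici 0) t = Λ t * ψ₂ t)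
    (ψ₁0 : ψ₁ 0 = 0) (ψ₁'0 : derivWithin ψ₁ (Ici 0) 0 = 1)
    (ψ₂0 : ψ₂ 0 = 1) (ψ₂'0 : derivWithin ψ₂ (Ici 0) 0 = 0)
    :
    (∀ t ∈ Ico (0 : ℝ) r, 0 < ψ₂ t + b * ψ₁ t) ∧
    (∀ t ∈ Ioo (0 : ℝ) r,
      g t ≤ (derivWithin ψ₂ (Ici 0) t + b * derivWithin ψ₁ (Ici 0) t) /
        (ψ₂ t + b * ψ₁ t)) ∧
    (∀ t ∈ Ico (0 : ℝ) r,
      Real.exp (∫ s in (0 : ℝ)..t, g s) ≤ ψ₂ t + b * ψ₁ t) := by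
  set ψ : ℝ → ℝ := fun t => ψ₂ t + b * ψ₁ t with hψ_def
  set φ : ℝ → ℝ := fun t => derivWithin ψ₂ (Ici 0) t + b * derivWithin ψ₁ (Ici 0) t with hφ_def
  set h : ℝ → ℝ := fun t => Real.exp (∫ s in (0:ℝ)..t, g s) with hh_def
  have hψ0 : ψ 0 = 1 := by simp [hψ_def, ψ₁0, ψ₂0]
  have hφ0 : φ 0 = b := by simp [hφ_def, ψ₁'0, ψ₂'0]
  have hh0 : h 0 = 1 := by simp [hh_def]
  have hhpos : ∀ t, 0 < h t := fun t => Real.exp_pos _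
  have hUD : UniqueDiffOn ℝ (Ici (0:ℝ)) := uniqueDiffOn_Ici 0
  have hψ₂d : DifferentiableOn ℝ ψ₂ (Ici 0) := hψ₂.differentiableOn (by norm_num)
  have hψ₁d : DifferentiableOn ℝ ψ₁ (Ici 0) := hψ₁.differentiableOn (by norm_num)
  have hψ₂'c : ContDiffOn ℝ 1 (derivWithin ψ₂ (Ici 0)) (Ici 0) :=
    hψ₂.derivWithin hUD (by norm_num)
  have hψ₁'c : ContDiffOn ℝ 1 (derivWithin ψ₁ (Ici 0)) (Ici 0) :=
    hψ₁.derivWithin hUD (by norm_num)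
  have hψc : ContinuousOn ψ (Ici 0) :=
    (hψ₂.continuousOn).add ((hψ₁.continuousOn).const_smul b)
  have hφc : ContinuousOn φ (Ici 0) :=
    (hψ₂'c.continuousOn).add ((hψ₁'c.continuousOn).const_smul b)
  have hψHD : ∀ t ∈ Ici (0:ℝ), HasDerivWithinAt ψ (φ t) (Ici 0) t := fun t ht =>
    ((hψ₂d t ht).hasDerivWithinAt).add (((hψ₁d t ht).hasDerivWithinAt).const_mul b)
  have hφHD : ∀ t ∈ Ici (0:ℝ), HasDerivWithinAt φ (Λ t * ψ t) (Ici 0) t := by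
    intro t ht
    have h2 := ((hψ₂'c.differentiableOn one_ne_zero) t ht).hasDerivWithinAt
    rw [odeψ₂ t ht] at h2
    have h1 := ((hψ₁'c.differentiableOn one_ne_zero) t ht).hasDerivWithinAt
    rw [odeψ₁ t ht] at h1
    have := h2.add (h1.const_mul b)
    convert (id this : HasDerivWithinAt φ _ (Ici 0) t) using 1
    simp only [hψ_def]; ring
  have hψHA : ∀ t ∈ Ioi (0:ℝ), HasDerivAt ψ (φ t) t := fun t ht =>
    (hψHD t (mem_Ici.mpr (le_of_lt ht))).hasDerivAt (Ici_mem_nhds ht)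
  have hφHA : ∀ t ∈ Ioi (0:ℝ), HasDerivAt φ (Λ t * ψ t) t := fun t ht =>
    (hφHD t (mem_Ici.mpr (le_of_lt ht))).hasDerivAt (Ici_mem_nhds ht)
  -- integrability of g
  have hsub : ∀ t : ℝ, 0 ≤ t → t < r → Icc (0:ℝ) t ⊆ Ico 0 r := fun t ht0 htr x hx =>
    ⟨hx.1, lt_of_le_of_lt hx.2 htr⟩
  have hgint : ∀ t : ℝ, 0 ≤ t → t < r → IntervalIntegrable g volume 0 t := by
    intro t ht0 htr
    apply ContinuousOn.intervalIntegrable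
    rw [uIcc_of_le ht0]
    exact hgc.mono (hsub t ht0 htr)
  -- continuity of h on Icc 0 T
  have hhc : ∀ T : ℝ, 0 ≤ T → T < r → ContinuousOn h (Icc 0 T) := by
    intro T hT0 hTr
    apply Real.continuous_exp.comp_continuousOn
    have : ContinuousOn (fun t => ∫ s in (0:ℝ)..t, g s) (uIcc 0 T) := by
      apply intervalIntegral.continuousOn_primitive_interval
      rw [uIcc_of_le hT0]
      exact (hgc.mono (hsub T hT0 hTr)).integrableOn_Icc
    rw [uIcc_of_le hT0] at this
    exact this
  -- derivative of h
  have hhHA : ∀ t ∈ Ioo (0:ℝ) r, HasDerivAt h (g t * h t) t := by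
    intro t ht
    have hca : ContinuousAt g t := hgc.continuousAt (Ico_mem_nhds ht.1 ht.2)
    have hH : HasDerivAt (fun u => ∫ s in (0:ℝ)..u, g s) (g t) t :=
      intervalIntegral.integral_hasDerivAt_right (hgint t ht.1.le ht.2)
        ((hgc.mono Ioo_subset_Ico_self).stronglyMeasurableAtFilter isOpen_Ioo t ht) hca
    have := hH.exp
    simpa [hh_def, mul_comm] using this
  -- derivative of g
  have hgHA : ∀ t ∈ Ioo (0:ℝ) r, HasDerivAt g (deriv g t) t := by
    intro t ht
    exact ((hg1.differentiableOn one_ne_zero t ht).differentiableAt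
      (isOpen_Ioo.mem_nhds ht)).hasDerivAt
  -- the Wronskian-type function
  set W : ℝ → ℝ := fun t => φ t * h t - ψ t * (g t * h t) with hW_def
  have hW0 : W 0 = 0 := by simp [hW_def, hφ0, hψ0, hh0, hg0]
  have hWHA : ∀ t ∈ Ioo (0:ℝ) r,
      HasDerivAt W (h t * (ψ t * (Λ t - (deriv g t + g t ^ 2)))) t := by
    intro t ht
    have h1 := ((hφHA t ht.1).mul (hhHA t ht)).sub
      ((hψHA t ht.1).mul ((hgHA t ht).mul (hhHA t ht)))
    convert (id h1 : HasDerivAt W _ t) using 1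
    rw [Pi.mul_apply]; ring
  -- key comparison lemma
  have key : ∀ T : ℝ, 0 ≤ T → T < r → (∀ s ∈ Icc (0:ℝ) T, 0 ≤ ψ s) →
      (∀ t ∈ Icc (0:ℝ) T, 0 ≤ W t) ∧ (∀ t ∈ Icc (0:ℝ) T, h t ≤ ψ t) := by
    intro T hT0 hTr hpos
    have hIoo : Ioo (0:ℝ) T ⊆ Ioo 0 r := Ioo_subset_Ioo le_rfl hTr.le
    have hIcc : Icc (0:ℝ) T ⊆ Ici 0 := fun x hx => hx.1
    have hWc : ContinuousOn W (Icc 0 T) := by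
      apply ContinuousOn.sub
      · exact (hφc.mono hIcc).mul (hhc T hT0 hTr)
      · exact (hψc.mono hIcc).mul (((hgc.mono (hsub T hT0 hTr)).mul (hhc T hT0 hTr)))
    have hWmono : MonotoneOn W (Icc 0 T) := by
      apply monotoneOn_of_deriv_nonneg (convex_Icc 0 T) hWc
      · rw [interior_Icc]
        exact fun x hx => ((hWHA x (hIoo hx)).differentiableAt).differentiableWithinAt
      · rw [interior_Icc]
        intro x hx
        rw [(hWHA x (hIoo hx)).deriv]
        have h1 : 0 ≤ ψ x := hpos x ⟨hx.1.le, hx.2.le⟩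
        have h2 : 0 ≤ Λ x - (deriv g x + g x ^ 2) :=
          sub_nonneg.mpr (hric x (hIoo hx))
        positivity
    have hWnn : ∀ t ∈ Icc (0:ℝ) T, 0 ≤ W t := by
      intro t ht
      have := hWmono (left_mem_Icc.mpr hT0) ht ht.1
      rw [hW0] at this
      exact this
    refine ⟨hWnn, ?_⟩
    -- F = ψ / h is monotone
    set F : ℝ → ℝ := fun t => ψ t / h t with hF_def
    have hFc : ContinuousOn F (Icc 0 T) :=
      (hψc.mono hIcc).div (hhc T hT0 hTr) (fun x _ => (hhpos x).ne')
    have hFHA : ∀ t ∈ Ioo (0:ℝ) T, HasDerivAt F (W t / h t ^ 2) t := by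
      intro t ht
      have := (hψHA t ht.1).div (hhHA t (hIoo ht)) (hhpos t).ne'
      convert (id this : HasDerivAt F _ t) using 1
    have hFmono : MonotoneOn F (Icc 0 T) := by
      apply monotoneOn_of_deriv_nonneg (convex_Icc 0 T) hFc
      · rw [interior_Icc]
        exact fun x hx => ((hFHA x hx).differentiableAt).differentiableWithinAt
      · rw [interior_Icc]
        intro x hx
        rw [(hFHA x hx).deriv]
        have h1 := hWnn x ⟨hx.1.le, hx.2.le⟩
        positivity
    intro t ht
    have := hFmono (left_mem_Icc.mpr hT0) ht ht.1
    have hF0 : F 0 = 1 := by simp [hF_def, hψ0, hh0]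
    rw [hF0] at this
    exact (one_le_div (hhpos t)).mp this
  -- positivity on [0, T] for every T < r
  have main : ∀ T : ℝ, 0 ≤ T → T < r → ∀ t ∈ Icc (0:ℝ) T, 0 < ψ t := by
    intro T hT0 hTr
    by_contra hcon
    push_neg at hcon
    obtain ⟨t, htmem, htle⟩ := hcon
    set K := Icc (0:ℝ) T ∩ ψ ⁻¹' (Iic 0) with hK_def
    have hKcl : IsClosed K :=
      (hψc.mono (fun x hx => hx.1)).preimage_isClosed_of_isClosed isClosed_Icc isClosed_Iic
    have hKcp : IsCompact K := isCompact_Icc.of_isClosed_subset hKcl inter_subset_left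
    have hKne : K.Nonempty := ⟨t, htmem, htle⟩
    set t₀ := sInf K with ht₀_def
    have ht₀K : t₀ ∈ K := hKcp.sInf_mem hKne
    have ht₀0 : 0 ≤ t₀ := ht₀K.1.1
    have ht₀T : t₀ ≤ T := ht₀K.1.2
    have ht₀r : t₀ < r := lt_of_le_of_lt ht₀T hTr
    have hlt : ∀ s, 0 ≤ s → s < t₀ → 0 < ψ s := by
      intro s hs0 hst
      by_contra hs
      push_neg at hs
      have : s ∈ K := ⟨⟨hs0, le_trans hst.le ht₀T⟩, hs⟩
      exact absurd (csInf_le hKcp.bddBelow this) (not_le.mpr hst)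
    have ht₀pos : 0 < t₀ := by
      rcases lt_or_eq_of_le ht₀0 with h1 | h1
      · exact h1
      · exfalso
        have := ht₀K.2
        rw [← h1] at this
        simp only [mem_preimage, mem_Iic, hψ0] at this
        linarith
    have hψnn : ∀ s ∈ Icc (0:ℝ) t₀, 0 ≤ ψ s := by
      intro s hs
      rcases lt_or_eq_of_le hs.2 with h1 | h1
      · exact (hlt s hs.1 h1).le
      · rw [h1]
        have hca : ContinuousAt ψ t₀ := (hψc.continuousAt (Ici_mem_nhds ht₀pos))
        have htend : Tendsto ψ (nhdsWithin t₀ (Iio t₀)) (nhds (ψ t₀)) :=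
          hca.continuousWithinAt.tendsto
        refine ge_of_tendsto htend ?_
        filter_upwards [Ioo_mem_nhdsLT_of_mem (⟨ht₀pos, le_rfl⟩ :
          t₀ ∈ Ioc (0:ℝ) t₀)] with x hx
        exact (hlt x hx.1.le hx.2).le
    have := (key t₀ ht₀0 ht₀r hψnn).2 t₀ (right_mem_Icc.mpr ht₀0)
    have hK2 := ht₀K.2
    simp only [mem_preimage, mem_Iic] at hK2
    have := lt_of_lt_of_le (hhpos t₀) this
    linarith
  refine ⟨?_, ?_, ?_⟩
  · intro t ht
    exact main t ht.1 ht.2 t (right_mem_Icc.mpr ht.1)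
  · intro t ht
    have hψpos : 0 < ψ t := main t ht.1.le ht.2 t (right_mem_Icc.mpr ht.1.le)
    have hψnn : ∀ s ∈ Icc (0:ℝ) t, 0 ≤ ψ s := fun s hs =>
      (main t ht.1.le ht.2 s hs).le
    have hW := (key t ht.1.le ht.2 hψnn).1 t (right_mem_Icc.mpr ht.1.le)
    rw [le_div_iff₀ hψpos]
    have hh := hhpos t
    simp only [hW_def] at hW
    have h2 : (g t * ψ t) * h t ≤ φ t * h t := by linear_combination hW
    exact le_of_mul_le_mul_right h2 hh
  · intro t ht
    have hψnn : ∀ s ∈ Icc (0:ℝ) t, 0 ≤ ψ s := fun s hs =>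
      (main t ht.1 ht.2 s hs).le
    exact (key t ht.1 ht.2 hψnn).2 t (right_mem_Icc.mpr ht.1)
end
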